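/- arXiv:1608.01040 — 10 statements merged into one kernel-verified Lean document; each statement's English description precedes it below -/
import Mathlib

section
/- If a hypergraph H = (V,E) admits an Euler family, then |E| ≤ Σ_{v ∈ V} ⌊deg(v)/2⌋. -/
open Finset

/-- The cyclically-next index in `Fin n`. -/
def nxt {n : ℕ} (i : Fin n) : Fin n := ⟨(i.1 + 1) % n, Nat.mod_lt _ i.pos⟩

/-- A closed strict trail `v₀ e₀ v₁ e₁ … v_{n-1} e_{n-1} v₀` in the hypergraph whose
edges are given by the family `E` (indexed by `ι`, so parallel edges are allowed):
a closed walk of length `n ≥ 2` with consecutive anchor vertices distinct,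
each `vᵢ, v_{i+1} ∈ eᵢ`, and pairwise distinct edges. -/
structure CST {V ι : Type} (E : ι → Finset V) where
  n : ℕ
  hn : 2 ≤ n
  vert : Fin n → V
  edge : Fin n → ι
  mem_left : ∀ i, vert i ∈ E (edge i)
  mem_right : ∀ i, vert (nxt i) ∈ E (edge i)
  ne_next : ∀ i, vert i ≠ vert (nxt i)
  edge_inj : Function.Injective edge

/-- An Euler family: a finite family of pairwise anchor-disjoint closed strict trails
such that every edge of the hypergraph lies in exactly one trail. -/
def HasEulerFamily {V ι : Type} (E : ι → Finset V) : Prop :=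
  ∃ (m : ℕ) (T : Fin m → CST E),
    (∀ e : ι, ∃ k i, (T k).edge i = e) ∧
    (∀ k k' i i', (T k).edge i = (T k').edge i' → k = k') ∧
    (∀ k k' i i', (T k).vert i = (T k').vert i' → k = k')

/-- An Euler tour: a single closed strict trail traversing every edge (exactly once). -/
def HasEulerTour {V ι : Type} (E : ι → Finset V) : Prop :=
  ∃ T : CST E, Function.Surjective T.edge

/-- The degree of a vertex: the number of edges containing it. -/
def hdeg {V ι : Type} [Fintype ι] [DecidableEq V] (E : ι → Finset V) (v : V) : ℕ :=
  (Finset.univ.filter fun e => v ∈ E e).card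

/-- The skeleton graph of the hypergraph: two distinct vertices are adjacent
iff they lie in a common edge.  Walk-connectivity in the hypergraph coincides with
connectivity in the skeleton. -/
def skeleton {V ι : Type} (E : ι → Finset V) : SimpleGraph V where
  Adj u w := u ≠ w ∧ ∃ e, u ∈ E e ∧ w ∈ E e
  symm := ⟨fun u w h => ⟨h.1.symm, h.2.imp fun _ he => ⟨he.2, he.1⟩⟩⟩
  loopless := ⟨fun _ h => h.1 rfl⟩

/-- The number of connected components of the hypergraph. -/
noncomputable def ccCount {V ι : Type} (E : ι → Finset V) : ℕ :=
  Nat.card (skeleton E).ConnectedComponent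

/-- The cyclically-previous index in `Fin n`. -/
def prv {n : ℕ} (i : Fin n) : Fin n := ⟨(i.1 + (n - 1)) % n, Nat.mod_lt _ i.pos⟩

lemma nxt_prv {n : ℕ} (i : Fin n) : nxt (prv i) = i := by
  rcases i with ⟨i, hi⟩
  simp only [nxt, prv, Fin.mk.injEq]
  rw [Nat.mod_add_mod]
  have h : i + (n - 1) + 1 = i + n := by omega
  rw [h, Nat.add_mod_right, Nat.mod_eq_of_lt hi]

lemma prv_inj {n : ℕ} : Function.Injective (prv (n := n)) := fun i j h => by
  have := congrArg nxt h; rwa [nxt_prv, nxt_prv] at this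

/-- If a hypergraph admits an Euler family, then
`|E| ≤ Σ_{v ∈ V} ⌊deg(v)/2⌋`. -/
theorem stmt1 {V ι : Type} [Fintype V] [Fintype ι] [DecidableEq V] [Nonempty V]
    (E : ι → Finset V) (h : HasEulerFamily E) :
    Fintype.card ι ≤ ∑ v : V, hdeg E v / 2 := by
  obtain ⟨m, T, hsurj, hE, hV⟩ := h
  let Φ : ((k : Fin m) × Fin (T k).n) → ι := fun s => (T s.1).edge s.2
  have hΦinj : Function.Injective Φ := by
    rintro ⟨k, i⟩ ⟨k', i'⟩ hkk
    obtain rfl := hE k k' i i' hkk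
    obtain rfl := (T k).edge_inj hkk
    rfl
  have hΦsurj : Function.Surjective Φ := by
    intro e; obtain ⟨k, i, hki⟩ := hsurj e; exact ⟨⟨k, i⟩, hki⟩
  let ψ : ((k : Fin m) × Fin (T k).n) → V := fun s => (T s.1).vert s.2
  have h2 : Fintype.card ((k : Fin m) × Fin (T k).n) =
      ∑ v : V, (univ.filter fun s => ψ s = v).card := by
    rw [← Finset.card_univ]
    exact Finset.card_eq_sum_card_fiberwise (fun s _ => mem_univ (ψ s))
  calc Fintype.card ι ≤ Fintype.card ((k : Fin m) × Fin (T k).n) :=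
        Fintype.card_le_of_surjective Φ hΦsurj
    _ = ∑ v : V, (univ.filter fun s => ψ s = v).card := h2
    _ ≤ ∑ v : V, hdeg E v / 2 := by
        refine Finset.sum_le_sum fun v _ => ?_
        rw [Nat.le_div_iff_mul_le two_pos]
        have hcard : (univ.filter fun s => ψ s = v).card * 2 =
            ((univ.filter fun s => ψ s = v) ×ˢ (univ : Finset Bool)).card := by
          simp [Finset.card_product]
        rw [hcard, hdeg]
        apply Finset.card_le_card_of_injOn
          (fun p => if p.2 then Φ p.1 else Φ ⟨p.1.1, prv p.1.2⟩)
        · rintro ⟨s, b⟩ hp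
          rw [Finset.mem_coe, Finset.mem_product, Finset.mem_filter] at hp
          obtain ⟨⟨-, hv⟩, -⟩ := hp
          rw [Finset.mem_coe, Finset.mem_filter]
          refine ⟨mem_univ _, ?_⟩
          simp only [ψ] at hv
          cases b with
          | true =>
            have := (T s.1).mem_left s.2
            rw [hv] at this
            simpa [Φ] using this
          | false =>
            have := (T s.1).mem_right (prv s.2)
            rw [nxt_prv, hv] at this
            simpa [Φ] using this
        · rintro ⟨⟨k, i⟩, b⟩ hp ⟨⟨k', i'⟩, b'⟩ hq heq
          rw [Finset.mem_coe, Finset.mem_product, Finset.mem_filter] at hp hq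
          obtain ⟨⟨-, hv⟩, -⟩ := hp
          obtain ⟨⟨-, hv'⟩, -⟩ := hq
          simp only [ψ] at hv hv'
          cases b <;> cases b' <;>
            simp only [if_true, if_false, Bool.false_eq_true, ite_false, ite_true] at heq
          · -- false false
            have h3 := hΦinj heq
            obtain ⟨rfl, h4⟩ := Sigma.mk.inj_iff.mp h3
            have := prv_inj (eq_of_heq h4)
            subst this; rfl
          · -- false true : ⟨k, prv i⟩ = ⟨k', i'⟩
            exfalso
            have h3 := hΦinj heq
            obtain ⟨rfl, h4⟩ := Sigma.mk.inj_iff.mp h3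
            have h5 : prv i = i' := eq_of_heq h4
            have := (T k).ne_next (prv i)
            rw [nxt_prv, h5] at this
            exact this (hv'.trans hv.symm)
          · -- true false
            exfalso
            have h3 := hΦinj heq
            obtain ⟨rfl, h4⟩ := Sigma.mk.inj_iff.mp h3
            have h5 : i = prv i' := eq_of_heq h4
            have := (T k).ne_next (prv i')
            rw [nxt_prv, ← h5] at this
            exact this (hv.trans hv'.symm)
          · -- true true
            have h3 := hΦinj heq
            obtain ⟨rfl, h4⟩ := Sigma.mk.inj_iff.mp h3
            have := eq_of_heq h4
            subst this; rfl
end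

section
/- Every edge of a hypergraph that admits an Euler family contains at least two vertices of degree at least 2. -/
open Finset

/-- Every anchor vertex of a closed strict trail has degree at least 2. -/
lemma vert_hdeg {V ι : Type} [Fintype ι] [DecidableEq V] {E : ι → Finset V}
    (T : CST E) (i : Fin T.n) : 2 ≤ hdeg E (T.vert i) := by
  have hn := T.hn
  have hpos : 0 < T.n := by omega
  set p : Fin T.n := ⟨(i.1 + T.n - 1) % T.n, Nat.mod_lt _ hpos⟩ with hp
  have hnxt : nxt p = i := by
    apply Fin.ext
    show ((i.1 + T.n - 1) % T.n + 1) % T.n = i.1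
    rw [Nat.mod_add_mod]
    have h1 : i.1 + T.n - 1 + 1 = i.1 + T.n := by omega
    rw [h1, Nat.add_mod_right, Nat.mod_eq_of_lt i.isLt]
  have hpne : p ≠ i := by
    intro hEq
    have hval : (i.1 + T.n - 1) % T.n = i.1 := congrArg Fin.val hEq
    rcases Nat.eq_zero_or_pos i.1 with h0 | h1
    · rw [h0] at hval
      simp only [Nat.zero_add] at hval
      rw [Nat.mod_eq_of_lt (by omega)] at hval
      omega
    · have h2 : i.1 + T.n - 1 = (i.1 - 1) + T.n := by omega
      rw [h2, Nat.add_mod_right, Nat.mod_eq_of_lt (by omega : i.1 - 1 < T.n)] at hval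
      omega
  have hmem1 : T.vert i ∈ E (T.edge i) := T.mem_left i
  have hmem2 : T.vert i ∈ E (T.edge p) := by
    have := T.mem_right p
    rwa [hnxt] at this
  have hne : T.edge p ≠ T.edge i := fun hEq => hpne (T.edge_inj hEq)
  unfold hdeg
  rw [Nat.succ_le_iff, Finset.one_lt_card]
  exact ⟨T.edge p, by simp [hmem2], T.edge i, by simp [hmem1], hne⟩

/-- Every edge of a hypergraph that admits an Euler family contains
at least two vertices of degree at least 2. -/
theorem stmt4 {V ι : Type} [Fintype ι] [DecidableEq V] [Nonempty V]
    (E : ι → Finset V) (h : HasEulerFamily E) :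
    ∀ e : ι, 2 ≤ ((E e).filter fun v => 2 ≤ hdeg E v).card := by
  intro e
  obtain ⟨m, T, hcov, -, -⟩ := h
  obtain ⟨k, i, he⟩ := hcov e
  subst he
  rw [Nat.succ_le_iff, Finset.one_lt_card]
  refine ⟨(T k).vert i, ?_, (T k).vert (nxt i), ?_, (T k).ne_next i⟩
  · exact Finset.mem_filter.mpr ⟨(T k).mem_left i, vert_hdeg (T k) i⟩
  · exact Finset.mem_filter.mpr ⟨(T k).mem_right i, vert_hdeg (T k) (nxt i)⟩
end

section
/- If e is a strong cut edge of a hypergraph H (that is, deleting e increases the number of connected components by exactly |e| − 1), then H does not admit an Euler family. -/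
open Finset

section Aux

variable {V ι : Type} (E : ι → Finset V) (e : ι)

/-- The hom from the skeleton of `H − e` to the skeleton of `H`. -/
def delHom : skeleton (fun i : {i : ι // i ≠ e} => E i.1) →g skeleton E where
  toFun := id
  map_rel' := fun h => ⟨h.1, ⟨h.2.choose.1, h.2.choose_spec⟩⟩

/-- Any walk in the skeleton of `H` either yields reachability in `H − e`, or
connects both endpoints (within `H − e`) to vertices of `e`. -/
lemma walk_cases {a b : V} (p : (skeleton E).Walk a b) :
    (skeleton (fun i : {i : ι // i ≠ e} => E i.1)).Reachable a b ∨
    ∃ x y, x ∈ E e ∧ y ∈ E e ∧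
      (skeleton (fun i : {i : ι // i ≠ e} => E i.1)).Reachable a x ∧
      (skeleton (fun i : {i : ι // i ≠ e} => E i.1)).Reachable b y := by
  classical
  induction p with
  | nil => exact Or.inl (SimpleGraph.Reachable.refl _)
  | @cons a c b hadj p ih =>
      obtain ⟨hne, j, ha, hc⟩ := hadj
      by_cases hj : j = e
      · subst hj
        rcases ih with h | ⟨x, y, hx, hy, hcx, hby⟩
        · exact Or.inr ⟨a, c, ha, hc, SimpleGraph.Reachable.refl _, h.symm⟩
        · exact Or.inr ⟨a, y, ha, hy, SimpleGraph.Reachable.refl _, hby⟩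
      · have hadj' : (skeleton (fun i : {i : ι // i ≠ e} => E i.1)).Adj a c :=
          ⟨hne, ⟨⟨j, hj⟩, ha, hc⟩⟩
        rcases ih with h | ⟨x, y, hx, hy, hcx, hby⟩
        · exact Or.inl (hadj'.reachable.trans h)
        · exact Or.inr ⟨x, y, hx, hy, hadj'.reachable.trans hcx, hby⟩

/-- Going around a closed strict trail avoiding the edge at index `i₀` connects
`vert (nxt i₀)` to `vert i₀` in `H − e`, where `e` is the edge at `i₀`. -/
lemma trail_reach (T : CST E) (i₀ : Fin T.n) (hi : T.edge i₀ = e) :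
    (skeleton (fun i : {i : ι // i ≠ e} => E i.1)).Reachable
      (T.vert (nxt i₀)) (T.vert i₀) := by
  have hnpos : 0 < T.n := lt_of_lt_of_le (by norm_num) T.hn
  have adj' : ∀ j : Fin T.n, j ≠ i₀ →
      (skeleton (fun i : {i : ι // i ≠ e} => E i.1)).Adj (T.vert j) (T.vert (nxt j)) := by
    intro j hj
    refine ⟨T.ne_next j, ⟨⟨T.edge j, fun h => hj (T.edge_inj (h.trans hi.symm))⟩,
      T.mem_left j, T.mem_right j⟩⟩
  have key : ∀ t, t ≤ T.n - 1 →
      (skeleton (fun i : {i : ι // i ≠ e} => E i.1)).Reachable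
        (T.vert (nxt i₀)) (T.vert ⟨(i₀.1 + 1 + t) % T.n, Nat.mod_lt _ hnpos⟩) := by
    intro t
    induction t with
    | zero =>
        intro _
        have : nxt i₀ = ⟨(i₀.1 + 1 + 0) % T.n, Nat.mod_lt _ hnpos⟩ := by
          apply Fin.ext; simp [nxt]
        rw [← this]
    | succ t iht =>
        intro ht
        have ht' : t ≤ T.n - 1 := by omega
        set j : Fin T.n := ⟨(i₀.1 + 1 + t) % T.n, Nat.mod_lt _ hnpos⟩ with hjdef
        have hjne : j ≠ i₀ := by
          intro h
          have h1 : (i₀.1 + (1 + t)) % T.n = i₀.1 % T.n := by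
            have hv := congrArg Fin.val h
            simp only [hjdef] at hv
            rw [Nat.mod_eq_of_lt i₀.2]
            have harith : i₀.1 + (1 + t) = i₀.1 + 1 + t := by omega
            rw [harith]
            exact hv
          have h2 : (1 + t) ≡ 0 [MOD T.n] := by
            have : (i₀.1 + (1 + t)) ≡ (i₀.1 + 0) [MOD T.n] := by
              unfold Nat.ModEq; simpa using h1
            exact Nat.ModEq.add_left_cancel' _ this
          have hdvd : T.n ∣ (1 + t) := Nat.modEq_zero_iff_dvd.mp h2
          have := Nat.le_of_dvd (by omega) hdvd
          omega
        have hnxt : nxt j = ⟨(i₀.1 + 1 + (t + 1)) % T.n, Nat.mod_lt _ hnpos⟩ := by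
          apply Fin.ext
          show (((i₀.1 + 1 + t) % T.n) + 1) % T.n = (i₀.1 + 1 + (t + 1)) % T.n
          rw [Nat.mod_add_mod, Nat.add_assoc]
        have := (iht ht').trans ((adj' j hjne).reachable)
        rwa [hnxt] at this
  have hfin := key (T.n - 1) le_rfl
  have : (⟨(i₀.1 + 1 + (T.n - 1)) % T.n, Nat.mod_lt _ hnpos⟩ : Fin T.n) = i₀ := by
    apply Fin.ext
    show (i₀.1 + 1 + (T.n - 1)) % T.n = i₀.1
    have : i₀.1 + 1 + (T.n - 1) = i₀.1 + T.n := by omega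
    rw [this, Nat.add_mod_right, Nat.mod_eq_of_lt i₀.2]
  rwa [this] at hfin

end Aux

section Count

open SimpleGraph

/-- The key counting bound: if two distinct vertices of `e` are connected in `H − e`,
then `cc(H−e) + 2 ≤ cc(H) + |e|`. -/
lemma count_le {V ι : Type} (E : ι → Finset V) (e : ι) (u w : V)
    (hu : u ∈ E e) (hw : w ∈ E e) (huw : u ≠ w)
    (hreach : (skeleton (fun i : {i : ι // i ≠ e} => E i.1)).Reachable u w)
    (hfin : Finite (skeleton (fun i : {i : ι // i ≠ e} => E i.1)).ConnectedComponent) :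
    Nat.card (skeleton (fun i : {i : ι // i ≠ e} => E i.1)).ConnectedComponent + 2 ≤
      Nat.card (skeleton E).ConnectedComponent + (E e).card := by
  classical
  set G' := skeleton (fun i : {i : ι // i ≠ e} => E i.1) with hG'
  set G := skeleton E with hG
  have hmkuw : G'.connectedComponentMk u = G'.connectedComponentMk w :=
    ConnectedComponent.sound hreach
  let f : G'.ConnectedComponent → G.ConnectedComponent := ConnectedComponent.map (delHom E e)
  have hfmk : ∀ v : V, f (G'.connectedComponentMk v) = G.connectedComponentMk v :=
    fun v => ConnectedComponent.map_mk _ _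
  have hfsurj : Function.Surjective f := by
    intro C
    obtain ⟨v, rfl⟩ := C.exists_rep
    exact ⟨G'.connectedComponentMk v, hfmk v⟩
  have hfinG : Finite G.ConnectedComponent := Finite.of_surjective f hfsurj
  set s : Finset V := E e \ {u, w} with hs
  have hssub : ({u, w} : Finset V) ⊆ E e := by
    intro x hx
    rcases Finset.mem_insert.mp hx with rfl | hx
    · exact hu
    · rw [Finset.mem_singleton.mp hx]; exact hw
  have hscard : s.card = (E e).card - 2 := by
    rw [hs, Finset.card_sdiff_of_subset hssub, Finset.card_pair huw]
  have hcard2 : 2 ≤ (E e).card := by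
    calc 2 = ({u, w} : Finset V).card := (Finset.card_pair huw).symm
    _ ≤ (E e).card := Finset.card_le_card hssub
  have hinj : Function.Injective (fun C : G'.ConnectedComponent =>
      if h : ∃ x : {x // x ∈ s}, G'.connectedComponentMk x.1 = C then
        (Sum.inr h.choose : G.ConnectedComponent ⊕ {x // x ∈ s})
      else Sum.inl (f C)) := by
    intro C₁ C₂ hEq
    simp only at hEq
    by_cases h₁ : ∃ x : {x // x ∈ s}, G'.connectedComponentMk x.1 = C₁ <;>
      by_cases h₂ : ∃ x : {x // x ∈ s}, G'.connectedComponentMk x.1 = C₂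
    · rw [dif_pos h₁, dif_pos h₂] at hEq
      have hxy := Sum.inr.inj hEq
      rw [← h₁.choose_spec, ← h₂.choose_spec, hxy]
    · rw [dif_pos h₁, dif_neg h₂] at hEq
      exact absurd hEq (by simp)
    · rw [dif_neg h₁, dif_pos h₂] at hEq
      exact absurd hEq (by simp)
    · rw [dif_neg h₁, dif_neg h₂] at hEq
      have hf : f C₁ = f C₂ := Sum.inl.inj hEq
      obtain ⟨a, rfl⟩ := C₁.exists_rep
      obtain ⟨b, rfl⟩ := C₂.exists_rep
      have hf' : G.connectedComponentMk a = G.connectedComponentMk b := by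
        rw [← hfmk a, ← hfmk b]; exact hf
      have hre : G.Reachable a b := ConnectedComponent.eq.mp hf' 
      obtain ⟨p⟩ := hre
      rcases walk_cases E e p with h | ⟨x, y, hx, hy, hax, hby⟩
      · exact ConnectedComponent.sound h
      · have hxs : x ∉ s :=
          fun hxs => h₁ ⟨⟨x, hxs⟩, ConnectedComponent.sound hax.symm⟩
        have hys : y ∉ s :=
          fun hys => h₂ ⟨⟨y, hys⟩, ConnectedComponent.sound hby.symm⟩
        have hxuw : x = u ∨ x = w := by
          rw [hs, Finset.mem_sdiff] at hxs
          push_neg at hxs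
          have := hxs hx
          simpa using this
        have hyuw : y = u ∨ y = w := by
          rw [hs, Finset.mem_sdiff] at hys
          push_neg at hys
          have := hys hy
          simpa using this
        have h1 : G'.connectedComponentMk a = G'.connectedComponentMk u := by
          rcases hxuw with rfl | rfl
          · exact ConnectedComponent.sound hax
          · exact (ConnectedComponent.sound hax).trans hmkuw.symm
        have h2 : G'.connectedComponentMk b = G'.connectedComponentMk u := by
          rcases hyuw with rfl | rfl
          · exact ConnectedComponent.sound hby
          · exact (ConnectedComponent.sound hby).trans hmkuw.symm
        exact h1.trans h2.symm
  have hle := Nat.card_le_card_of_injective _ hinj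
  rw [Nat.card_sum, Nat.card_eq_fintype_card (α := {x // x ∈ s}), Fintype.card_coe] at hle
  omega

end Count

/-- If `e` is a strong cut edge of a hypergraph `H` (a cut edge with
`cc(H−e) = cc(H) + |e| − 1`), then `H` does not admit an Euler family. -/
theorem stmt5 {V ι : Type} [Nonempty V] (E : ι → Finset V) (e : ι)
    (hcut : ccCount E < ccCount (fun i : {i : ι // i ≠ e} => E i.1))
    (hstrong : ccCount (fun i : {i : ι // i ≠ e} => E i.1) =
      ccCount E + ((E e).card - 1)) :
    ¬ HasEulerFamily E := by
  rintro ⟨m, T, hall, -, -⟩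
  obtain ⟨k, i₀, hi⟩ := hall e
  have hu : (T k).vert i₀ ∈ E e := by rw [← hi]; exact (T k).mem_left i₀
  have hw : (T k).vert (nxt i₀) ∈ E e := by rw [← hi]; exact (T k).mem_right i₀
  have huw : (T k).vert i₀ ≠ (T k).vert (nxt i₀) := (T k).ne_next i₀
  have hreach := (trail_reach E e (T k) i₀ hi).symm
  have hfin : Finite (skeleton (fun i : {i : ι // i ≠ e} => E i.1)).ConnectedComponent := by
    have hpos : 0 < ccCount (fun i : {i : ι // i ≠ e} => E i.1) :=
      lt_of_le_of_lt (Nat.zero_le _) hcut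
    exact (Nat.card_pos_iff.mp hpos).2
  have hle := count_le E e _ _ hu hw huw hreach hfin
  unfold ccCount at hcut hstrong
  omega
end

section
/- Let H be a hypergraph with a cut edge e such that H − e has at least two non-trivial connected components (components containing at least one edge). Then H does not admit an Euler tour. -/
open Finset

/-- If `e` is a cut edge of `H` such that `H − e` has at least two
non-trivial connected components (i.e. there are edges `f, g ≠ e` lying in different
connected components of `H − e`), then `H` does not admit an Euler tour. -/
theorem stmt6 {V ι : Type} [Nonempty V] (E : ι → Finset V) (e : ι)
    (hcut : ccCount E < ccCount (fun i : {i : ι // i ≠ e} => E i.1))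
    (hnontriv : ∃ (f g : ι), f ≠ e ∧ g ≠ e ∧ ∃ u ∈ E f, ∃ w ∈ E g,
      ¬ (skeleton (fun i : {i : ι // i ≠ e} => E i.1)).Reachable u w) :
    ¬ HasEulerTour E := by
  rintro ⟨T, hsurj⟩
  obtain ⟨f, g, hf, hg, u, hu, w, hw, hreach⟩ := hnontriv
  set G := skeleton (fun i : {i : ι // i ≠ e} => E i.1) with hG
  -- reachability via a common edge ≠ e
  have reach_of_mem : ∀ (j : ι) (hj : j ≠ e) {x y : V},
      x ∈ E j → y ∈ E j → G.Reachable x y := by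
    intro j hj x y hx hy
    by_cases h : x = y
    · subst h; exact SimpleGraph.Reachable.refl x
    · exact SimpleGraph.Adj.reachable (G := G) (And.intro h ⟨⟨j, hj⟩, hx, hy⟩)
  obtain ⟨i₀, hi₀⟩ := hsurj e
  have hnpos : 0 < T.n := lt_of_lt_of_le (by norm_num) T.hn
  -- the index at cyclic distance k from i₀
  let idx : ℕ → Fin T.n := fun k => ⟨(i₀.1 + k) % T.n, Nat.mod_lt _ hnpos⟩
  have haux : ∀ k, nxt (idx k) = idx (k + 1) := by
    intro k
    apply Fin.ext
    show ((i₀.1 + k) % T.n + 1) % T.n = (i₀.1 + (k + 1)) % T.n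
    rw [Nat.mod_add_mod]
    ring_nf
  have hne : ∀ k, 1 ≤ k → k ≤ T.n - 1 → T.edge (idx k) ≠ e := by
    intro k hk1 hk2 hEq
    rw [← hi₀] at hEq
    have h2 := T.edge_inj hEq
    have h3 : (i₀.1 + k) % T.n = i₀.1 := congrArg Fin.val h2
    have hi : i₀.1 < T.n := i₀.2
    rcases Nat.lt_or_ge (i₀.1 + k) T.n with h | h
    · rw [Nat.mod_eq_of_lt h] at h3; omega
    · rw [Nat.mod_eq_sub_mod h, Nat.mod_eq_of_lt (by omega)] at h3; omega
  -- every vert at distance 1 ≤ k ≤ n-1 is reachable from the base vertex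
  have key : ∀ k, 1 ≤ k → k ≤ T.n - 1 →
      G.Reachable (T.vert (idx 1)) (T.vert (idx k)) := by
    intro k
    induction k with
    | zero => intro h; omega
    | succ k ih =>
      intro _ hk2
      by_cases hk0 : k = 0
      · subst hk0; exact SimpleGraph.Reachable.refl _
      · have h1 : 1 ≤ k := by omega
        have h2 : k ≤ T.n - 1 := by omega
        have step : G.Reachable (T.vert (idx k)) (T.vert (idx (k + 1))) := by
          apply reach_of_mem (T.edge (idx k)) (hne k h1 h2)
          · exact T.mem_left (idx k)
          · rw [← haux k]; exact T.mem_right (idx k)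
        exact (ih h1 h2).trans step
  -- any vertex of an edge ≠ e is reachable from the base
  have main : ∀ (i : Fin T.n) (x : V), T.edge i ≠ e → x ∈ E (T.edge i) →
      G.Reachable (T.vert (idx 1)) x := by
    intro i x hie hx
    have hii : i.1 ≠ i₀.1 := by
      intro h
      exact hie (by rw [show i = i₀ from Fin.ext h, hi₀])
    have hi : i.1 < T.n := i.2
    have hi0 : i₀.1 < T.n := i₀.2
    set k : ℕ := if i₀.1 ≤ i.1 then i.1 - i₀.1 else i.1 + T.n - i₀.1 with hk
    have hk1 : 1 ≤ k := by rw [hk]; split <;> omega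
    have hk2 : k ≤ T.n - 1 := by rw [hk]; split <;> omega
    have hidx : idx k = i := by
      apply Fin.ext
      show (i₀.1 + k) % T.n = i.1
      rw [hk]
      split
      · rw [Nat.mod_eq_of_lt (by omega)]; omega
      · rw [Nat.mod_eq_sub_mod (by omega), Nat.mod_eq_of_lt (by omega)]; omega
    have h1 := key k hk1 hk2
    rw [hidx] at h1
    exact h1.trans (reach_of_mem (T.edge i) hie (T.mem_left i) hx)
  obtain ⟨iF, hiF⟩ := hsurj f
  obtain ⟨iG, hiG⟩ := hsurj g
  have hu' := main iF u (by rw [hiF]; exact hf) (by rw [hiF]; exact hu)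
  have hw' := main iG w (by rw [hiG]; exact hg) (by rw [hiG]; exact hw)
  exact hreach (hu'.symm.trans hw')
end

section
/- Let H = (V,E) be a hypergraph and L a graph on vertex set E in which e and e' are adjacent whenever |e ∩ e'| ≥ 3 (i.e., L is a subgraph of the 3*-intersection graph of H). If L has a Hamilton cycle, then H admits an Euler tour. -/
open Finset

lemma walk_support_get {V : Type} {G : SimpleGraph V} :
    ∀ {u v : V} (q : G.Walk u v) (n : ℕ) (h : n < q.support.length),
      q.support.get ⟨n, h⟩ = q.getVert n := by
  intro u v q
  induction q with
  | nil => intro n h; simp at h; subst h; rfl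
  | cons hadj q ih =>
    intro n h
    cases n with
    | zero => rfl
    | succ m =>
      simp only [SimpleGraph.Walk.support_cons, SimpleGraph.Walk.getVert_cons_succ]
      exact ih m (by simpa [SimpleGraph.Walk.support_cons] using h)

lemma choose_seq {V : Type} [DecidableEq V] {n : ℕ} (hn : 0 < n)
    (S : Fin n → Finset V) (hS : ∀ i, 3 ≤ (S i).card) :
    ∃ g : ℕ → V, (∀ k, g k ∈ S ⟨k % n, Nat.mod_lt _ hn⟩) ∧
      (∀ k, g (k + 1) ≠ g k) ∧ (∀ k, g (k + 1) ≠ g 0) := by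
  have h0 : (S ⟨0 % n, Nat.mod_lt _ hn⟩).Nonempty :=
    Finset.card_pos.mp (by have := hS ⟨0 % n, Nat.mod_lt _ hn⟩; omega)
  obtain ⟨c0, hc0⟩ := h0
  have hstep : ∀ (k : ℕ) (prev : V),
      (S ⟨(k + 1) % n, Nat.mod_lt _ hn⟩ \ {prev, c0}).Nonempty := by
    intro k prev
    rw [← Finset.card_pos]
    have h1 := hS ⟨(k + 1) % n, Nat.mod_lt _ hn⟩
    have h2 : ({prev, c0} : Finset V).card ≤ 2 :=
      (Finset.card_insert_le _ _).trans (by simp)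
    have := Finset.le_card_sdiff ({prev, c0} : Finset V)
      (S ⟨(k + 1) % n, Nat.mod_lt _ hn⟩)
    omega
  obtain ⟨g, hg0, hgs⟩ : ∃ g : ℕ → V, g 0 = c0 ∧
      ∀ k, g (k + 1) = (hstep k (g k)).choose :=
    ⟨fun k => Nat.rec c0 (fun k prev => (hstep k prev).choose) k, rfl, fun k => rfl⟩
  refine ⟨g, ?_, ?_, ?_⟩
  · intro k
    cases k with
    | zero => rw [hg0]; exact hc0
    | succ m =>
      have := (hstep m (g m)).choose_spec
      rw [Finset.mem_sdiff] at this
      rw [hgs]; exact this.1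
  · intro k
    have := (hstep k (g k)).choose_spec
    rw [Finset.mem_sdiff] at this
    rw [hgs]
    exact fun h => this.2 (by simp [h])
  · intro k
    have := (hstep k (g k)).choose_spec
    rw [Finset.mem_sdiff] at this
    rw [hgs, hg0]
    exact fun h => this.2 (by simp [h])

/-- Let `L` be a graph on the edge set of a hypergraph `H` in which
adjacency implies intersection in at least 3 vertices (so `L` is a subgraph of the
3*-intersection graph of `H`).  If `L` has a Hamilton cycle, then `H` admits an
Euler tour. -/
theorem stmt11 {V ι : Type} [Fintype ι] [DecidableEq V] [DecidableEq ι] [Nonempty V]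
    (E : ι → Finset V) (L : SimpleGraph ι)
    (hsub : ∀ e f, L.Adj e f → 3 ≤ (E e ∩ E f).card)
    (hham : ∃ (a : ι) (p : L.Walk a a), p.IsHamiltonianCycle) :
    HasEulerTour E := by
  obtain ⟨a, p, hp⟩ := hham
  set n := p.length with hnlen
  have hn3 : 3 ≤ n := hp.isCycle.three_le_length
  have hnnil : ¬ p.Nil := hp.isCycle.not_nil
  have hn0 : 0 < n := by omega
  set edge : Fin n → ι := fun i => p.getVert (i.1 + 1) with hedge
  have hA : ∀ i : Fin n, L.Adj (edge i) (edge (nxt i)) := by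
    intro i
    by_cases h : i.1 + 1 < n
    · have hv : (nxt i).1 = i.1 + 1 := Nat.mod_eq_of_lt h
      have hadj := p.adj_getVert_succ (i := i.1 + 1) h
      simpa [hedge, hv] using hadj
    · have hi : i.1 + 1 = n := by have := i.isLt; omega
      have h0 : (nxt i).1 = 0 := by simp [nxt, hi]
      have h1 : edge i = p.getVert 0 := by
        simp [hedge, hi, hnlen, SimpleGraph.Walk.getVert_length,
          SimpleGraph.Walk.getVert_zero]
      have h2 : edge (nxt i) = p.getVert 1 := by simp [hedge, h0]
      rw [h1, h2]
      exact p.adj_getVert_succ (by omega)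
  have htail_len : p.tail.length + 1 = n := SimpleGraph.Walk.length_tail_add_one hnnil
  have htailpath : p.tail.IsPath := hp.isHamiltonian_tail.isPath
  have hgvt : ∀ k, p.tail.getVert k = p.getVert (k + 1) := fun k =>
    SimpleGraph.Walk.getVert_tail p
  have hinj : Function.Injective edge := by
    intro i j hij
    have hi : i.1 < p.tail.support.length := by
      rw [SimpleGraph.Walk.length_support]; have := i.isLt; omega
    have hj : j.1 < p.tail.support.length := by
      rw [SimpleGraph.Walk.length_support]; have := j.isLt; omega
    have hg : p.tail.support.get ⟨i.1, hi⟩ = p.tail.support.get ⟨j.1, hj⟩ := by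
      rw [walk_support_get, walk_support_get, hgvt, hgvt]; exact hij
    have heq := (htailpath.support_nodup.get_inj_iff).mp hg
    rw [Fin.mk.injEq] at heq
    exact Fin.ext heq
  have hsurj : Function.Surjective edge := by
    intro e
    have he : e ∈ p.tail.support := hp.isHamiltonian_tail.mem_support e
    rw [SimpleGraph.Walk.mem_support_iff_exists_getVert] at he
    obtain ⟨k, hk1, hk2⟩ := he
    refine ⟨⟨k, by omega⟩, ?_⟩
    show p.getVert (k + 1) = e
    rw [← hgvt]; exact hk1
  set prv : Fin n → Fin n := fun i => ⟨(i.1 + (n - 1)) % n, Nat.mod_lt _ hn0⟩ with hprv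
  have hprv_nxt : ∀ i, prv (nxt i) = i := by
    intro i
    apply Fin.ext
    show ((i.1 + 1) % n + (n - 1)) % n = i.1
    rw [Nat.mod_add_mod]
    have h1 : i.1 + 1 + (n - 1) = i.1 + n := by omega
    rw [h1, Nat.add_mod_right]
    exact Nat.mod_eq_of_lt i.isLt
  have hnxt_prv : ∀ i, nxt (prv i) = i := by
    intro i
    apply Fin.ext
    show ((i.1 + (n - 1)) % n + 1) % n = i.1
    rw [Nat.mod_add_mod]
    have h1 : i.1 + (n - 1) + 1 = i.1 + n := by omega
    rw [h1, Nat.add_mod_right]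
    exact Nat.mod_eq_of_lt i.isLt
  set S : Fin n → Finset V := fun i => E (edge (prv i)) ∩ E (edge i) with hSdef
  have hS : ∀ i, 3 ≤ (S i).card := by
    intro i
    have := hA (prv i)
    rw [hnxt_prv] at this
    exact hsub _ _ this
  obtain ⟨g, hg1, hg2, hg3⟩ := choose_seq hn0 S hS
  have hgmem : ∀ i : Fin n, g i.1 ∈ S i := by
    intro i
    have := hg1 i.1
    have h : (⟨i.1 % n, Nat.mod_lt _ hn0⟩ : Fin n) = i :=
      Fin.ext (Nat.mod_eq_of_lt i.isLt)
    rwa [h] at this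
  refine ⟨⟨n, by omega, fun i => g i.1, edge, ?_, ?_, ?_, hinj⟩, hsurj⟩
  · intro i
    exact Finset.mem_of_mem_inter_right (hgmem i)
  · intro i
    have := Finset.mem_of_mem_inter_left (hgmem (nxt i))
    rwa [hprv_nxt] at this
  · intro i
    show g i.1 ≠ g (nxt i).1
    by_cases h : i.1 + 1 < n
    · have hv : (nxt i).1 = i.1 + 1 := Nat.mod_eq_of_lt h
      rw [hv]
      exact (hg2 i.1).symm
    · have hi : i.1 + 1 = n := by have := i.isLt; omega
      have h0 : (nxt i).1 = 0 := by simp [nxt, hi]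
      rw [h0]
      have h1 : i.1 = (n - 2) + 1 := by omega
      rw [h1]
      exact hg3 (n - 2)
end

section
/- Let W_L = e_0 e_1 ... e_{k-1} e_0 be a cycle in the intersection graph of a hypergraph H = (V,E) such that every vertex of H has degree at most 2. Then there exist vertices v_0, v_1, ..., v_{k-1} ∈ V such that v_0 e_0 v_1 e_1 ... v_{k-1} e_{k-1} v_0 is a closed strict trail in H (i.e., v_i ∈ e_{i-1} ∩ e_i for all i modulo k, and v_{i-1} ≠ v_i for all i). -/
open Finset

/-- Let `e₀ e₁ … e_{k-1} e₀` be a cycle in the intersection graph of a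
hypergraph all of whose vertices have degree at most 2 (so the `eᵢ` are pairwise
distinct edges and cyclically consecutive edges intersect).  Then one can choose
vertices `v₀,…,v_{k-1}` with `vᵢ, v_{i+1} ∈ eᵢ` and `vᵢ ≠ v_{i+1}` (indices mod `k`),
i.e. `v₀ e₀ v₁ e₁ … v_{k-1} e_{k-1} v₀` is a closed strict trail. -/
theorem stmt12 {V ι : Type} [Fintype ι] [DecidableEq V] [Nonempty V]
    (E : ι → Finset V) (k : ℕ) (hk : 3 ≤ k)
    (e : Fin k → ι) (einj : Function.Injective e)
    (hcyc : ∀ i, (E (e i) ∩ E (e (nxt i))).Nonempty)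
    (hdeg2 : ∀ v, hdeg E v ≤ 2) :
    ∃ v : Fin k → V, ∀ i, v i ∈ E (e i) ∧ v (nxt i) ∈ E (e i) ∧ v i ≠ v (nxt i) := by
  classical
  haveI : NeZero k := ⟨by omega⟩
  choose w hw using hcyc
  have h1 : ((1 : Fin k)).val = 1 := by
    simp [Fin.val_one', Nat.mod_eq_of_lt (show 1 < k by omega)]
  have h2 : ((1 + 1 : Fin k)).val = 2 := by
    rw [Fin.add_def, h1]
    exact Nat.mod_eq_of_lt (by omega)
  have hnxt : ∀ i : Fin k, nxt i = i + 1 := by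
    intro i
    apply Fin.ext
    simp [nxt, Fin.add_def, h1]
  have hne01 : (1 : Fin k) ≠ 0 := by
    intro h
    have := congrArg Fin.val h
    rw [h1, Fin.val_zero] at this
    exact one_ne_zero this
  have hne02 : (1 + 1 : Fin k) ≠ 0 := by
    intro h
    have := congrArg Fin.val h
    rw [h2, Fin.val_zero] at this
    exact two_ne_zero this
  refine ⟨fun i => w (i - 1), fun i => ?_⟩
  have hwl := (Finset.mem_inter.mp (hw (i - 1))).1
  have hwr := (Finset.mem_inter.mp (hw (i - 1))).2
  rw [hnxt, sub_add_cancel] at hwr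
  have hmem1 : w (i - 1) ∈ E (e i) := hwr
  have hsimp : nxt i - 1 = i := by rw [hnxt]; exact add_sub_cancel_right i 1
  refine ⟨hmem1, ?_, ?_⟩
  · show w (nxt i - 1) ∈ E (e i)
    rw [hsimp]
    exact (Finset.mem_inter.mp (hw i)).1
  · show w (i - 1) ≠ w (nxt i - 1)
    rw [hsimp]
    intro heq
    -- the common vertex u lies in three pairwise distinct edges
    set u := w i with hu
    have hu1 : u ∈ E (e (i - 1)) := heq ▸ hwl
    have hu2 : u ∈ E (e i) := (Finset.mem_inter.mp (hw i)).1
    have hu3 : u ∈ E (e (i + 1)) := by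
      have := (Finset.mem_inter.mp (hw i)).2
      rwa [hnxt] at this
    -- index distinctness
    have hia : i - 1 ≠ i := by
      intro h
      have : i = i + 1 := by
        conv_lhs => rw [← sub_add_cancel i 1, h]
      nth_rewrite 1 [← add_zero i] at this
      exact hne01 (add_left_cancel this).symm
    have hib : i ≠ i + 1 := by
      intro h
      nth_rewrite 1 [← add_zero i] at h
      exact hne01 (add_left_cancel h).symm
    have hic : i - 1 ≠ i + 1 := by
      intro h
      have : i = i + (1 + 1) := by
        conv_lhs => rw [← sub_add_cancel i 1, h]
        rw [add_assoc]
      nth_rewrite 1 [← add_zero i] at this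
      exact hne02 (add_left_cancel this).symm
    have hsub : ({e (i - 1), e i, e (i + 1)} : Finset ι)
        ⊆ Finset.univ.filter (fun f => u ∈ E f) := by
      intro f hf
      simp only [Finset.mem_insert, Finset.mem_singleton] at hf
      simp only [Finset.mem_filter, Finset.mem_univ, true_and]
      rcases hf with rfl | rfl | rfl <;> assumption
    have hcard : ({e (i - 1), e i, e (i + 1)} : Finset ι).card = 3 := by
      rw [Finset.card_insert_of_notMem, Finset.card_insert_of_notMem,
        Finset.card_singleton]
      · simp [einj.ne hib]
      · simp only [Finset.mem_insert, Finset.mem_singleton]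
        push_neg
        exact ⟨einj.ne hia, einj.ne hic⟩
    have := Finset.card_le_card hsub
    rw [hcard] at this
    have := hdeg2 u
    unfold hdeg at this
    omega
end

section
/- Let W_L = e_0 e_1 ... e_{k-1} e_0 be a cycle of even length k in the intersection graph of a hypergraph H = (V,E) such that |e_i ∩ e_{i+1}| ≥ 2 for all i (indices mod k). Then there exist vertices v_0,...,v_{k-1} ∈ V with v_i ∈ e_{i-1} ∩ e_i (indices mod k) and v_{i-1} ≠ v_i for all i, i.e., v_0 e_0 v_1 e_1 ... v_{k-1} e_{k-1} v_0 is a closed strict trail in H. -/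
open Finset

/-- Even cycles are 2-choosable: given lists `{a i, b i}` around an even cycle,
we can pick `u i` from each list with consecutive picks distinct. -/
lemma twoChoosableEvenCycle {V : Type} [DecidableEq V] {k : ℕ}
    (hk : 3 ≤ k) (hkeven : Even k) (a b : Fin k → V) (hab : ∀ i, a i ≠ b i) :
    ∃ u : Fin k → V, ∀ i, (u i = a i ∨ u i = b i) ∧ u i ≠ u (nxt i) := by
  have hk0 : 0 < k := by omega
  by_cases hall : ∀ i, ({a (nxt i), b (nxt i)} : Finset V) = ({a i, b i} : Finset V)
  · -- all lists equal: alternate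
    set i0 : Fin k := ⟨0, hk0⟩ with hi0
    have key : ∀ m (hm : m < k), ({a ⟨m, hm⟩, b ⟨m, hm⟩} : Finset V) = {a i0, b i0} := by
      intro m
      induction m with
      | zero => intro hm; rfl
      | succ n ih =>
        intro hm
        have hn : n < k := by omega
        have hnxt : (⟨n + 1, hm⟩ : Fin k) = nxt ⟨n, hn⟩ := by
          simp only [nxt, Fin.mk.injEq]
          exact (Nat.mod_eq_of_lt hm).symm
        rw [hnxt, hall ⟨n, hn⟩, ih hn]
    have key' : ∀ i : Fin k, ({a i, b i} : Finset V) = {a i0, b i0} := by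
      intro i; have := key i.1 i.2; simpa using this
    refine ⟨fun i => if i.1 % 2 = 0 then a i0 else b i0, fun i => ?_⟩
    have hmem : a i0 ∈ ({a i, b i} : Finset V) ∧ b i0 ∈ ({a i, b i} : Finset V) := by
      rw [key' i]; simp
    constructor
    · by_cases hp : i.1 % 2 = 0
      · simp only [if_pos hp]
        rcases Finset.mem_insert.mp hmem.1 with h | h
        · exact Or.inl h
        · exact Or.inr (Finset.mem_singleton.mp h)
      · simp only [if_neg hp]
        rcases Finset.mem_insert.mp hmem.2 with h | h
        · exact Or.inl h
        · exact Or.inr (Finset.mem_singleton.mp h)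
    · have hpar : (nxt i).1 % 2 ≠ i.1 % 2 := by
        simp only [nxt]
        rcases Nat.lt_or_ge (i.1 + 1) k with h | h
        · rw [Nat.mod_eq_of_lt h]; omega
        · have : i.1 = k - 1 := by omega
          have hz : (i.1 + 1) % k = 0 := by
            have : i.1 + 1 = k := by omega
            simp [this]
          rw [hz]
          rcases hkeven with ⟨t, ht⟩
          omega
      by_cases hp : i.1 % 2 = 0
      · have hq : ¬ ((nxt i).1 % 2 = 0) := by omega
        simp only [hp, if_true, hq, if_false]
        exact hab i0
      · have hq : (nxt i).1 % 2 = 0 := by omega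
        simp only [hp, if_false, hq, if_true]
        exact (hab i0).symm
  · -- some consecutive lists differ: break the cycle there
    push_neg at hall
    obtain ⟨j, hj⟩ := hall
    -- find c in the list at `nxt j` not in the list at `j`
    have hcard : ∀ i : Fin k, ({a i, b i} : Finset V).card = 2 := by
      intro i; rw [Finset.card_insert_of_notMem (by simp [hab i]), Finset.card_singleton]
    have hnsub : ¬ ({a (nxt j), b (nxt j)} : Finset V) ⊆ ({a j, b j} : Finset V) := by
      intro hsub
      exact hj (Finset.eq_of_subset_of_card_le hsub (by rw [hcard, hcard]))
    obtain ⟨c, hc1, hc2⟩ := Finset.not_subset.mp hnsub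
    set s : ℕ := (nxt j).1 with hs
    have hslt : s < k := (nxt j).2
    -- index function around the cycle starting at nxt j
    set idx : ℕ → Fin k := fun m => ⟨(s + m) % k, Nat.mod_lt _ hk0⟩ with hidx
    -- the greedy step and choice function
    let step : V → ℕ → V := fun x m => if x = a (idx m) then b (idx m) else a (idx m)
    have hstep_mem : ∀ x m, step x m = a (idx m) ∨ step x m = b (idx m) := by
      intro x m
      by_cases h : x = a (idx m)
      · right; simp only [step, if_pos h]
      · left; simp only [step, if_neg h]
    have hstep_ne : ∀ x m, step x m ≠ x := by
      intro x m
      by_cases h : x = a (idx m)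
      · simp only [step, if_pos h]; rw [h]; exact (hab _).symm
      · simp only [step, if_neg h]; exact fun hc => h hc.symm
    let f : ℕ → V := fun m =>
      Nat.rec (motive := fun _ => V) c (fun n fn => step fn (n + 1)) m
    have hf0 : f 0 = c := rfl
    have hfs : ∀ m, f (m + 1) = step (f m) (m + 1) := fun m => rfl
    have hfmem : ∀ m, f m = a (idx m) ∨ f m = b (idx m) := by
      intro m
      cases m with
      | zero =>
        have : idx 0 = nxt j := by
          exact Fin.ext (by simp [hidx, Nat.mod_eq_of_lt hslt]; exact hs)
        rw [hf0, this]
        rcases Finset.mem_insert.mp hc1 with h | h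
        · exact Or.inl h
        · exact Or.inr (Finset.mem_singleton.mp h)
      | succ n =>
        rw [hfs n]
        exact hstep_mem _ _
    have hfne : ∀ m, f (m + 1) ≠ f m := by
      intro m
      rw [hfs m]
      exact hstep_ne _ _
    -- the offset function: position of i on the cycle starting at nxt j
    set d : Fin k → ℕ := fun i => (i.1 + (k - s)) % k with hd
    have hdlt : ∀ i, d i < k := fun i => Nat.mod_lt _ hk0
    have hidxd : ∀ i, idx (d i) = i := by
      intro i
      apply Fin.ext
      simp only [hidx, hd]
      have h1 : s + (i.1 + (k - s)) = i.1 + k := by omega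
      rw [Nat.add_mod_mod, h1, Nat.add_mod_right, Nat.mod_eq_of_lt i.2]
    refine ⟨fun i => f (d i), fun i => ?_⟩
    constructor
    · show f (d i) = a i ∨ f (d i) = b i
      have := hfmem (d i); rwa [hidxd i] at this
    · show f (d i) ≠ f (d (nxt i))
      by_cases hlast : d i < k - 1
      · have hlt : (i.1 + (k - s)) % k + 1 < k := by
          have h := hlast; simp only [hd] at h; omega
        have hstep : d (nxt i) = d i + 1 := by
          simp only [hd, nxt]
          rw [Nat.mod_add_mod]
          have h1 : i.1 + 1 + (k - s) = i.1 + (k - s) + 1 := by omega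
          rw [h1, ← Nat.mod_add_mod]
          exact Nat.mod_eq_of_lt hlt
        rw [hstep]
        exact (hfne (d i)).symm
      · have hdi : d i = k - 1 := by have := hdlt i; omega
        have hidxk : idx (k - 1) = i := by rw [← hdi]; exact hidxd i
        have hij : i = j := by
          rw [← hidxk]
          apply Fin.ext
          simp only [hidx]
          have hs1 : s = (j.1 + 1) % k := rfl
          rcases Nat.lt_or_ge (j.1 + 1) k with h | h
          · rw [hs1, Nat.mod_eq_of_lt h]
            have h2 : j.1 + 1 + (k - 1) = j.1 + k := by omega
            rw [h2, Nat.add_mod_right, Nat.mod_eq_of_lt j.2]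
          · have hjk : j.1 + 1 = k := by have := j.2; omega
            have hz : s = 0 := by rw [hs1, hjk, Nat.mod_self]
            rw [hz, Nat.zero_add, Nat.mod_eq_of_lt (by omega)]
            omega
        have hdnxt : d (nxt i) = 0 := by
          rw [hij]
          simp only [hd]
          have h2 : (nxt j).1 + (k - s) = k := by omega
          rw [h2, Nat.mod_self]
        rw [hdnxt, hf0, hdi]
        have hmem := hfmem (k - 1)
        rw [hidxk, hij] at hmem
        simp only [Finset.mem_insert, Finset.mem_singleton, not_or] at hc2
        rcases hmem with h | h <;> rw [h]
        · exact fun hc => hc2.1 hc.symm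
        · exact fun hc => hc2.2 hc.symm

/-- Let `e₀ e₁ … e_{k-1} e₀` be a cycle of even length `k` in the
intersection graph of a hypergraph, with `|eᵢ ∩ e_{i+1}| ≥ 2` for all `i` (mod `k`).
Then one can choose vertices `v₀,…,v_{k-1}` with `vᵢ, v_{i+1} ∈ eᵢ` and
`vᵢ ≠ v_{i+1}` (indices mod `k`), i.e. `v₀ e₀ v₁ e₁ … v_{k-1} e_{k-1} v₀` is a
closed strict trail. -/
theorem stmt13 {V ι : Type} [DecidableEq V] [Nonempty V]
    (E : ι → Finset V) (k : ℕ) (hk : 3 ≤ k) (hkeven : Even k)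
    (e : Fin k → ι) (einj : Function.Injective e)
    (hcyc : ∀ i, 2 ≤ (E (e i) ∩ E (e (nxt i))).card) :
    ∃ v : Fin k → V, ∀ i, v i ∈ E (e i) ∧ v (nxt i) ∈ E (e i) ∧ v i ≠ v (nxt i) := by
  have hk0 : 0 < k := by omega
  choose a ha b hb hab using fun i => Finset.one_lt_card.mp (hcyc i)
  obtain ⟨u, hu⟩ := twoChoosableEvenCycle hk hkeven a b hab
  have humem : ∀ i, u i ∈ E (e i) ∩ E (e (nxt i)) := by
    intro i
    rcases (hu i).1 with h | h <;> rw [h]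
    · exact ha i
    · exact hb i
  set prev : Fin k → Fin k := fun i => ⟨(i.1 + (k - 1)) % k, Nat.mod_lt _ hk0⟩ with hprev
  have hnp : ∀ i, nxt (prev i) = i := by
    intro i
    apply Fin.ext
    simp only [hprev, nxt]
    rw [Nat.mod_add_mod]
    have h1 : i.1 + (k - 1) + 1 = i.1 + k := by omega
    rw [h1, Nat.add_mod_right, Nat.mod_eq_of_lt i.2]
  have hpn : ∀ i, prev (nxt i) = i := by
    intro i
    apply Fin.ext
    simp only [hprev, nxt]
    rw [Nat.mod_add_mod]
    have h1 : i.1 + 1 + (k - 1) = i.1 + k := by omega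
    rw [h1, Nat.add_mod_right, Nat.mod_eq_of_lt i.2]
  refine ⟨fun i => u (prev i), fun i => ?_⟩
  refine ⟨?_, ?_, ?_⟩
  · show u (prev i) ∈ E (e i)
    have := humem (prev i)
    rw [hnp i] at this
    exact (Finset.mem_inter.mp this).2
  · show u (prev (nxt i)) ∈ E (e i)
    rw [hpn i]
    exact (Finset.mem_inter.mp (humem i)).1
  · show u (prev i) ≠ u (prev (nxt i))
    rw [hpn i]
    have := (hu (prev i)).2
    rwa [hnp i] at this
end

section
/- Every r-regular r-uniform hypergraph with r ≥ 2 admits an Euler family. -/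
open Finset

lemma exists_sdr {V ι : Type} [Fintype ι] [DecidableEq V] (E : ι → Finset V) (r : ℕ)
    (hr : 1 ≤ r) (hcard : ∀ e, r ≤ (E e).card) (hdle : ∀ v, hdeg E v ≤ r) :
    ∃ f : ι → V, Function.Injective f ∧ ∀ e, f e ∈ E e := by
  rw [← Finset.all_card_le_biUnion_card_iff_exists_injective]
  intro s
  have hfil : ∀ e ∈ s, (s.biUnion E).filter (· ∈ E e) = E e := by
    intro e he
    ext v
    simp only [Finset.mem_filter, Finset.mem_biUnion, and_iff_right_iff_imp]
    exact fun hv => ⟨e, he, hv⟩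
  have key : r * s.card ≤ r * (s.biUnion E).card := by
    calc r * s.card = ∑ _e ∈ s, r := by rw [Finset.sum_const, smul_eq_mul, mul_comm]
      _ ≤ ∑ e ∈ s, (E e).card := Finset.sum_le_sum fun e _ => hcard e
      _ = ∑ e ∈ s, ((s.biUnion E).filter (· ∈ E e)).card := by
          exact Finset.sum_congr rfl fun e he => by rw [hfil e he]
      _ = ∑ e ∈ s, ∑ v ∈ s.biUnion E, if v ∈ E e then 1 else 0 := by
          exact Finset.sum_congr rfl fun e _ => Finset.card_filter _ _
      _ = ∑ v ∈ s.biUnion E, ∑ e ∈ s, if v ∈ E e then 1 else 0 := Finset.sum_comm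
      _ = ∑ v ∈ s.biUnion E, (s.filter fun e => v ∈ E e).card := by
          exact Finset.sum_congr rfl fun v _ => (Finset.card_filter _ _).symm
      _ ≤ ∑ _v ∈ s.biUnion E, r := by
          refine Finset.sum_le_sum fun v _ => le_trans ?_ (hdle v)
          exact Finset.card_le_card fun e he => by
            simp only [Finset.mem_filter] at *; exact ⟨Finset.mem_univ e, he.2⟩
      _ = r * (s.biUnion E).card := by rw [Finset.sum_const, smul_eq_mul, mul_comm]
  exact Nat.le_of_mul_le_mul_left key hr

lemma card_eq_card {V ι : Type} [Fintype ι] [DecidableEq V] [Fintype V] (E : ι → Finset V)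
    (r : ℕ) (hr : 1 ≤ r) (huniform : ∀ e, (E e).card = r) (hregular : ∀ v, hdeg E v = r) :
    Fintype.card ι = Fintype.card V := by
  have key : r * Fintype.card ι = r * Fintype.card V := by
    calc r * Fintype.card ι = ∑ e : ι, (E e).card := by
          simp [huniform, Finset.sum_const, mul_comm]
      _ = ∑ e : ι, ∑ v : V, if v ∈ E e then 1 else 0 := by
          refine Finset.sum_congr rfl fun e _ => ?_
          rw [← Finset.card_filter]
          congr 1
          ext v; simp
      _ = ∑ v : V, ∑ e : ι, if v ∈ E e then 1 else 0 := Finset.sum_comm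
      _ = ∑ v : V, hdeg E v := Finset.sum_congr rfl fun v _ => (Finset.card_filter _ _).symm
      _ = r * Fintype.card V := by simp [hregular, Finset.sum_const, mul_comm]
  exact Nat.eq_of_mul_eq_mul_left hr key

/-- Every `r`-regular `r`-uniform hypergraph with `r ≥ 2` admits an
Euler family. -/
theorem stmt15 {V ι : Type} [Fintype ι] [DecidableEq V] [Nonempty V]
    (E : ι → Finset V) (r : ℕ) (hr : 2 ≤ r)
    (huniform : ∀ e, (E e).card = r) (hregular : ∀ v, hdeg E v = r) :
    HasEulerFamily E := by
  classical
  haveI : Fintype V := by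
    refine ⟨Finset.univ.biUnion E, fun v => ?_⟩
    have h : (Finset.univ.filter fun e => v ∈ E e).Nonempty := by
      rw [← Finset.card_pos]
      have := hregular v
      unfold hdeg at this
      omega
    obtain ⟨e, he⟩ := h
    simp only [Finset.mem_filter] at he
    exact Finset.mem_biUnion.mpr ⟨e, Finset.mem_univ e, he.2⟩
  have hcardVι : Fintype.card ι = Fintype.card V :=
    card_eq_card E r (by omega) huniform hregular
  -- first matching σ
  obtain ⟨σ, hσinj, hσmem⟩ := exists_sdr E r (by omega)
    (fun e => (huniform e).ge) (fun v => (hregular v).le)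
  have hσbij : Function.Bijective σ :=
    (Fintype.bijective_iff_injective_and_card σ).mpr ⟨hσinj, hcardVι⟩
  set S : ι ≃ V := Equiv.ofBijective σ hσbij with hS
  -- second matching τ in E minus σ
  obtain ⟨τ, hτinj, hτmem⟩ := exists_sdr (fun e => (E e).erase (σ e)) (r - 1) (by omega)
    (fun e => by rw [Finset.card_erase_of_mem (hσmem e), huniform])
    (fun v => by
      have h1 : (Finset.univ.filter fun e => v ∈ (E e).erase (σ e)) ⊆
          (Finset.univ.filter fun e => v ∈ E e).erase (S.symm v) := by
        intro e he
        simp only [Finset.mem_filter, Finset.mem_erase] at he ⊢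
        refine ⟨fun h => he.2.1 ?_, Finset.mem_univ e, he.2.2⟩
        rw [h]
        exact (S.apply_symm_apply v).symm
      have h2 : S.symm v ∈ (Finset.univ.filter fun e => v ∈ E e) := by
        simp only [Finset.mem_filter]
        refine ⟨Finset.mem_univ _, ?_⟩
        have := hσmem (S.symm v)
        have hv : σ (S.symm v) = v := S.apply_symm_apply v
        rwa [hv] at this
      calc (Finset.univ.filter fun e => v ∈ (E e).erase (σ e)).card
          ≤ ((Finset.univ.filter fun e => v ∈ E e).erase (S.symm v)).card :=
            Finset.card_le_card h1
        _ = hdeg E v - 1 := by rw [Finset.card_erase_of_mem h2]; rfl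
        _ ≤ r - 1 := by rw [hregular v])
  have hτE : ∀ e, τ e ∈ E e := fun e => Finset.mem_of_mem_erase (hτmem e)
  have hτσ : ∀ e, τ e ≠ σ e := fun e => Finset.ne_of_mem_erase (hτmem e)
  have hτbij : Function.Bijective τ :=
    (Fintype.bijective_iff_injective_and_card τ).mpr ⟨hτinj, hcardVι⟩
  set Tt : ι ≃ V := Equiv.ofBijective τ hτbij with hTt
  set π : Equiv.Perm V := S.symm.trans Tt with hπ
  have hπapp : ∀ v, π v = τ (S.symm v) := fun v => rfl
  have hπne : ∀ v, π v ≠ v := by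
    intro v h
    apply hτσ (S.symm v)
    rw [hπapp] at h
    rw [h]
    exact (S.apply_symm_apply v).symm
  -- every point is periodic
  have hper : ∀ v : V, v ∈ Function.periodicPts ⇑π := by
    intro v
    refine Function.mk_mem_periodicPts (orderOf_pos π) ?_
    show (⇑π)^[orderOf π] v = v
    rw [Equiv.Perm.iterate_eq_pow, pow_orderOf_eq_one]
    rfl
  have hnp2 : ∀ v : V, 2 ≤ Function.minimalPeriod ⇑π v := by
    intro v
    have hpos := Function.minimalPeriod_pos_of_mem_periodicPts (hper v)
    have hne1 : Function.minimalPeriod ⇑π v ≠ 1 := by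
      intro h
      have h2 := Function.iterate_minimalPeriod (f := ⇑π) (x := v)
      rw [h] at h2
      exact hπne v h2
    omega
  have hsc : ∀ (x : V) (i : ℕ), π.SameCycle x ((⇑π)^[i] x) := by
    intro x i
    refine ⟨(i : ℤ), ?_⟩
    rw [zpow_natCast]
    rfl
  letI st : Setoid V := Equiv.Perm.SameCycle.setoid π
  letI : DecidableEq (Quotient st) := Classical.decEq _
  set m := Fintype.card (Quotient st) with hm
  set eqv : Fin m ≃ Quotient st := (Fintype.equivFin (Quotient st)).symm with heqv
  set rep : Fin m → V := fun k => (eqv k).out with hrep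
  have hclass : ∀ (k : Fin m) (i : ℕ), (⟦(⇑π)^[i] (rep k)⟧ : Quotient st) = eqv k := by
    intro k i
    have h1 : (⟦rep k⟧ : Quotient st) = eqv k := Quotient.out_eq _
    rw [← h1]
    exact Quotient.sound (Setoid.symm (hsc (rep k) i))
  -- build trails
  set nn : Fin m → ℕ := fun k => Function.minimalPeriod ⇑π (rep k) with hnn
  have hmem_left : ∀ (k : Fin m) (i : Fin (nn k)),
      (⇑π)^[i.1] (rep k) ∈ E (S.symm ((⇑π)^[i.1] (rep k))) := by
    intro k i
    have := hσmem (S.symm ((⇑π)^[i.1] (rep k)))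
    have hv : σ (S.symm ((⇑π)^[i.1] (rep k))) = (⇑π)^[i.1] (rep k) := S.apply_symm_apply _
    rwa [hv] at this
  have hvert_next : ∀ (k : Fin m) (i : Fin (nn k)),
      (⇑π)^[(nxt i).1] (rep k) = π ((⇑π)^[i.1] (rep k)) := by
    intro k i
    show (⇑π)^[(i.1 + 1) % nn k] (rep k) = π ((⇑π)^[i.1] (rep k))
    rw [Function.iterate_mod_minimalPeriod_eq]
    rw [Function.iterate_succ_apply']
  set T : Fin m → CST E := fun k =>
    { n := nn k
      hn := hnp2 (rep k)
      vert := fun i => (⇑π)^[i.1] (rep k)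
      edge := fun i => S.symm ((⇑π)^[i.1] (rep k))
      mem_left := fun i => hmem_left k i
      mem_right := fun i => by
        show (⇑π)^[(nxt i).1] (rep k) ∈ E (S.symm ((⇑π)^[i.1] (rep k)))
        rw [hvert_next k i, hπapp]
        exact hτE _
      ne_next := fun i => by
        show (⇑π)^[i.1] (rep k) ≠ (⇑π)^[(nxt i).1] (rep k)
        rw [hvert_next k i]
        exact fun h => hπne _ h.symm
      edge_inj := fun i j h => by
        have h2 : (⇑π)^[i.1] (rep k) = (⇑π)^[j.1] (rep k) := S.symm.injective h
        have := Function.iterate_injOn_Iio_minimalPeriod (f := ⇑π) (x := rep k)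
          (Set.mem_Iio.mpr i.2) (Set.mem_Iio.mpr j.2) h2
        exact Fin.ext this } with hT
  refine ⟨m, T, ?_, ?_, ?_⟩
  · -- coverage
    intro e
    set w := S e with hw
    set k := eqv.symm ⟦w⟧ with hk
    have hsame : π.SameCycle (rep k) w := by
      apply Quotient.exact (s := st)
      show (⟦rep k⟧ : Quotient st) = ⟦w⟧
      rw [Quotient.out_eq, hk, Equiv.apply_symm_apply]
    obtain ⟨i, _, hi⟩ := hsame.exists_pow_eq'
    have hi' : (⇑π)^[i] (rep k) = w := hi
    have hjlt : i % nn k < nn k :=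
      Nat.mod_lt _ (Nat.lt_of_lt_of_le Nat.zero_lt_two (hnp2 (rep k)))
    refine ⟨k, ⟨i % nn k, hjlt⟩, ?_⟩
    show S.symm ((⇑π)^[i % nn k] (rep k)) = e
    have h5 : (⇑π)^[i % nn k] (rep k) = w := by
      have h6 : (⇑π)^[i % Function.minimalPeriod ⇑π (rep k)] (rep k) = (⇑π)^[i] (rep k) :=
        Function.iterate_mod_minimalPeriod_eq
      exact h6.trans hi'
    rw [h5, hw, Equiv.symm_apply_apply]
  · -- edge disjoint
    intro k k' i i' h
    have h2 : (⇑π)^[i.1] (rep k) = (⇑π)^[i'.1] (rep k') := by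
      have := congrArg S h
      exact S.symm.injective h
    have h3 : eqv k = eqv k' := by
      rw [← hclass k i.1, ← hclass k' i'.1, h2]
    exact eqv.injective h3
  · -- vertex disjoint
    intro k k' i i' h
    have h3 : eqv k = eqv k' := by
      rw [← hclass k i.1, ← hclass k' i'.1]
      exact congrArg _ h
    exact eqv.injective h3
end

section
/- A hypergraph admits an Euler family if and only if its edge set can be partitioned into edge sets of cycles of the hypergraph (i.e., it admits a cycle decomposition). -/
open Finset

section Aux
variable {V ι : Type} {E : ι → Finset V}

lemma mod_cancel {m a t t' : ℕ} (ht : t < m) (ht' : t' < m)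
    (h : (a + t) % m = (a + t') % m) : t = t' := by
  have h2 : t % m = t' % m := Nat.ModEq.add_left_cancel' a h
  rwa [Nat.mod_eq_of_lt ht, Nat.mod_eq_of_lt ht'] at h2

lemma key_mod {m p : ℕ} (i : ℕ) (hp : p < m) : (i + (p + m - i % m) % m) % m = p := by
  have hm : 0 < m := lt_of_le_of_lt (Nat.zero_le _) hp
  rw [Nat.add_mod_mod]
  have h1 : i + (p + m - i % m) = m * (i / m) + (m + p) := by
    have := Nat.div_add_mod i m
    have h2 : i % m < m := Nat.mod_lt _ hm
    omega
  rw [h1, Nat.mul_add_mod, Nat.add_mod_left, Nat.mod_eq_of_lt hp]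

namespace CST

lemma npos (T : CST E) : 0 < T.n := lt_of_lt_of_le (by norm_num) T.hn

lemma one_lt (T : CST E) : 1 < T.n := lt_of_lt_of_le (by norm_num) T.hn

def v (T : CST E) (s : ℕ) : V := T.vert ⟨s % T.n, Nat.mod_lt _ T.npos⟩

def e (T : CST E) (s : ℕ) : ι := T.edge ⟨s % T.n, Nat.mod_lt _ T.npos⟩

lemma vert_eq_v (T : CST E) (p : Fin T.n) : T.vert p = T.v p.1 := by
  simp [v, Nat.mod_eq_of_lt p.isLt]

lemma edge_eq_e (T : CST E) (p : Fin T.n) : T.edge p = T.e p.1 := by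
  simp [e, Nat.mod_eq_of_lt p.isLt]

lemma v_mod (T : CST E) (s : ℕ) : T.v (s % T.n) = T.v s := by
  simp [v, Nat.mod_mod_of_dvd _ dvd_rfl]

lemma v_add_n (T : CST E) (s : ℕ) : T.v (s + T.n) = T.v s := by
  simp [v, Nat.add_mod_right]

lemma succ_mod (T : CST E) (s : ℕ) : (s % T.n + 1) % T.n = (s + 1) % T.n := by
  conv_rhs => rw [Nat.add_mod s 1, Nat.mod_eq_of_lt T.one_lt]

lemma v_mem (T : CST E) (s : ℕ) : T.v s ∈ E (T.e s) := T.mem_left _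

lemma v_succ_mem (T : CST E) (s : ℕ) : T.v (s + 1) ∈ E (T.e s) := by
  have h := T.mem_right ⟨s % T.n, Nat.mod_lt _ T.npos⟩
  have : nxt (⟨s % T.n, Nat.mod_lt _ T.npos⟩ : Fin T.n) =
      ⟨(s + 1) % T.n, Nat.mod_lt _ T.npos⟩ := by
    simp only [nxt, Fin.mk.injEq]; exact T.succ_mod s
  rw [this] at h
  exact h

lemma v_ne (T : CST E) (s : ℕ) : T.v s ≠ T.v (s + 1) := by
  have h := T.ne_next ⟨s % T.n, Nat.mod_lt _ T.npos⟩
  have : nxt (⟨s % T.n, Nat.mod_lt _ T.npos⟩ : Fin T.n) =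
      ⟨(s + 1) % T.n, Nat.mod_lt _ T.npos⟩ := by
    simp only [nxt, Fin.mk.injEq]; exact T.succ_mod s
  rw [this] at h
  exact h

lemma e_inj (T : CST E) {s t : ℕ} (h : T.e s = T.e t) : s % T.n = t % T.n :=
  congrArg Fin.val (T.edge_inj h)

end CST

/-- Build a CST from `ℕ`-indexed data. -/
def mkCST (n : ℕ) (hn : 2 ≤ n) (vf : ℕ → V) (ef : ℕ → ι)
    (hwrap : vf n = vf 0)
    (hl : ∀ s, s < n → vf s ∈ E (ef s))
    (hr : ∀ s, s < n → vf (s + 1) ∈ E (ef s))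
    (hne : ∀ s, s < n → vf s ≠ vf (s + 1))
    (hinj : ∀ s, s < n → ∀ t, t < n → ef s = ef t → s = t) : CST E where
  n := n
  hn := hn
  vert i := vf i.1
  edge i := ef i.1
  mem_left i := hl i.1 i.isLt
  mem_right i := by
    show vf ((i.1 + 1) % n) ∈ E (ef i.1)
    have : vf ((i.1 + 1) % n) = vf (i.1 + 1) := by
      rcases Nat.lt_or_ge (i.1 + 1) n with h | h
      · rw [Nat.mod_eq_of_lt h]
      · have he : i.1 + 1 = n := by have := i.isLt; omega
        rw [he, Nat.mod_self]; exact hwrap.symm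
    rw [this]; exact hr i.1 i.isLt
  ne_next i := by
    show vf i.1 ≠ vf ((i.1 + 1) % n)
    have : vf ((i.1 + 1) % n) = vf (i.1 + 1) := by
      rcases Nat.lt_or_ge (i.1 + 1) n with h | h
      · rw [Nat.mod_eq_of_lt h]
      · have he : i.1 + 1 = n := by have := i.isLt; omega
        rw [he, Nat.mod_self]; exact hwrap.symm
    rw [this]; exact hne i.1 i.isLt
  edge_inj i j h := Fin.ext (hinj i.1 i.isLt j.1 j.isLt h)

@[simp] lemma mkCST_n (n hn vf ef hwrap hl hr hne hinj) :
    (mkCST (E := E) n hn vf ef hwrap hl hr hne hinj).n = n := rfl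

@[simp] lemma mkCST_edge (n hn vf ef hwrap hl hr hne hinj) (i) :
    (mkCST (E := E) n hn vf ef hwrap hl hr hne hinj).edge i = ef i.1 := rfl

@[simp] lemma mkCST_vert (n hn vf ef hwrap hl hr hne hinj) (i) :
    (mkCST (E := E) n hn vf ef hwrap hl hr hne hinj).vert i = vf i.1 := rfl

end Aux

section Main
variable {V ι : Type} {E : ι → Finset V}

open CST

lemma e_congr (T : CST E) {s t : ℕ} (h : s % T.n = t % T.n) : T.e s = T.e t := by
  unfold CST.e; congr 1; exact Fin.ext h

/-- Split a non-cycle closed strict trail into two shorter ones. -/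
lemma split (T : CST E) (h : ¬ Function.Injective T.vert) :
    ∃ (T1 T2 : CST E) (f1 : Fin T1.n → Fin T.n) (f2 : Fin T2.n → Fin T.n),
      T1.n < T.n ∧ T2.n < T.n ∧
      Function.Injective f1 ∧ Function.Injective f2 ∧
      (∀ i, T1.edge i = T.edge (f1 i)) ∧
      (∀ i, T2.edge i = T.edge (f2 i)) ∧
      (∀ p : Fin T.n, (∃ i, f1 i = p) ∨ (∃ i, f2 i = p)) ∧
      (∀ i i', f1 i ≠ f2 i') := by
  obtain ⟨a, b, hab, hne⟩ := Function.not_injective_iff.mp h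
  have key : ∃ (ii jj : ℕ), ii < jj ∧ jj < T.n ∧ T.v ii = T.v jj := by
    rcases Nat.lt_or_ge a.1 b.1 with hl | hl
    · exact ⟨a.1, b.1, hl, b.isLt, by rw [← T.vert_eq_v, ← T.vert_eq_v]; exact hab⟩
    · have hne' : a.1 ≠ b.1 := fun hh => hne (Fin.ext hh)
      exact ⟨b.1, a.1, by omega, a.isLt,
        by rw [← T.vert_eq_v, ← T.vert_eq_v]; exact hab.symm⟩
  obtain ⟨i, j, hij, hjn, hveq⟩ := key
  set n := T.n with hn
  set d := j - i with hd
  have hjd : j = i + d := by omega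
  have hd2 : 2 ≤ d := by
    by_contra hc
    have hd1 : d = 1 := by omega
    exact T.v_ne i (by rw [hveq]; congr 1; omega)
  have hdn : d ≤ n - 2 := by
    by_contra hc
    have h1 : i = 0 ∧ j = n - 1 := by omega
    apply T.v_ne (n - 1)
    have h2 : T.v n = T.v 0 := by
      have := T.v_add_n 0; rwa [Nat.zero_add] at this
    have h3 : (n - 1) + 1 = n := by have := T.npos; omega
    rw [h3, h2, ← h1.1, ← h1.2]
    exact hveq.symm
  have hn2 : 2 ≤ n := T.hn
  have hdlt : d < n := by omega
  refine ⟨mkCST d hd2 (fun t => T.v (i + t)) (fun t => T.e (i + t))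
      (by show T.v (i + d) = T.v (i + 0)
          rw [show i + d = j from hjd.symm, Nat.add_zero]; exact hveq.symm)
      (fun s _ => T.v_mem (i + s))
      (fun s _ => T.v_succ_mem (i + s))
      (fun s _ => T.v_ne (i + s))
      (fun s hs t ht hef => mod_cancel (by omega) (by omega) (T.e_inj hef)),
    mkCST (n - d) (by omega) (fun t => T.v (j + t)) (fun t => T.e (j + t))
      (by show T.v (j + (n - d)) = T.v (j + 0)
          rw [show j + (n - d) = i + n by omega, T.v_add_n, Nat.add_zero]; exact hveq)
      (fun s _ => T.v_mem (j + s))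
      (fun s _ => T.v_succ_mem (j + s))
      (fun s _ => T.v_ne (j + s))
      (fun s hs t ht hef => mod_cancel (by omega) (by omega) (T.e_inj hef)),
    (fun t => ⟨i + t.1, by have := t.isLt; simp only [mkCST_n] at this; omega⟩),
    (fun t => ⟨(j + t.1) % n, Nat.mod_lt _ T.npos⟩),
    by simp only [mkCST_n]; omega,
    by simp only [mkCST_n]; omega,
    ?_, ?_, ?_, ?_, ?_, ?_⟩
  · intro t t' htt
    have : i + t.1 = i + t'.1 := congrArg Fin.val htt
    exact Fin.ext (by omega)
  · intro t t' htt
    have h1 : (j + t.1) % n = (j + t'.1) % n := congrArg Fin.val htt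
    have ht := t.isLt; have ht' := t'.isLt
    simp only [mkCST_n] at ht ht'
    exact Fin.ext (mod_cancel (by omega) (by omega) h1)
  · intro t
    simp only [mkCST_edge]
    rw [T.edge_eq_e]
  · intro t
    simp only [mkCST_edge]
    rw [T.edge_eq_e]
    exact e_congr T (Nat.mod_mod _ _).symm
  · intro p
    rcases Nat.lt_or_ge p.1 j with h1 | h1
    · rcases Nat.lt_or_ge p.1 i with h2 | h2
      · refine Or.inr ⟨⟨p.1 + n - j, by simp only [mkCST_n]; omega⟩, Fin.ext ?_⟩
        show (j + (p.1 + n - j)) % n = p.1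
        rw [show j + (p.1 + n - j) = p.1 + n by omega, Nat.add_mod_right,
          Nat.mod_eq_of_lt p.isLt]
      · exact Or.inl ⟨⟨p.1 - i, by simp only [mkCST_n]; omega⟩,
          Fin.ext (show i + (p.1 - i) = p.1 by omega)⟩
    · refine Or.inr ⟨⟨p.1 - j, by simp only [mkCST_n]; have := p.isLt; omega⟩, Fin.ext ?_⟩
      show (j + (p.1 - j)) % n = p.1
      rw [show j + (p.1 - j) = p.1 by omega, Nat.mod_eq_of_lt p.isLt]
  · intro t t' htt
    have h1 : i + t.1 = (j + t'.1) % n := congrArg Fin.val htt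
    have ht := t.isLt; have ht' := t'.isLt
    simp only [mkCST_n] at ht ht'
    rcases Nat.lt_or_ge (j + t'.1) n with h2 | h2
    · rw [Nat.mod_eq_of_lt h2] at h1; omega
    · rw [Nat.mod_eq_sub_mod h2, Nat.mod_eq_of_lt (by omega)] at h1; omega

/-- Every closed strict trail decomposes into edge-disjoint cycles. -/
lemma decomp : ∀ (N : ℕ) (T : CST E), T.n ≤ N →
    ∃ (σ : Type) (_ : Fintype σ) (C : σ → CST E)
      (g : (k : σ) → Fin (C k).n → Fin T.n),
      (∀ k, Function.Injective (C k).vert) ∧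
      (∀ k i, (C k).edge i = T.edge (g k i)) ∧
      (∀ p, ∃ k i, g k i = p) ∧
      (∀ k k' i i', g k i = g k' i' → k = k') := by
  intro N
  induction N with
  | zero => intro T hT; have := T.npos; omega
  | succ N ih =>
    intro T hT
    by_cases hinj : Function.Injective T.vert
    · exact ⟨PUnit, inferInstance, fun _ => T, fun _ i => i, fun _ => hinj,
        fun _ _ => rfl, fun p => ⟨⟨⟩, p, rfl⟩, fun k k' _ _ _ => Subsingleton.elim k k'⟩
    · obtain ⟨T1, T2, f1, f2, h1n, h2n, hf1i, hf2i, he1, he2, hun, hdisj⟩ := split T hinj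
      obtain ⟨σ1, i1, C1, g1, q1, q2, q3, q4⟩ := ih T1 (by omega)
      obtain ⟨σ2, i2, C2, g2, r1, r2, r3, r4⟩ := ih T2 (by omega)
      refine ⟨σ1 ⊕ σ2, by exact @instFintypeSum _ _ i1 i2, Sum.elim C1 C2,
        fun k => match k with
          | .inl a => fun i => f1 (g1 a i)
          | .inr b => fun i => f2 (g2 b i), ?_, ?_, ?_, ?_⟩
      · rintro (a | b)
        · exact q1 a
        · exact r1 b
      · rintro (a | b) i
        · show (C1 a).edge i = T.edge (f1 (g1 a i))
          rw [q2 a i, he1]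
        · show (C2 b).edge i = T.edge (f2 (g2 b i))
          rw [r2 b i, he2]
      · intro p
        rcases hun p with ⟨i, hi⟩ | ⟨i, hi⟩
        · obtain ⟨a, s, hs⟩ := q3 i
          exact ⟨.inl a, s, by show f1 (g1 a s) = p; rw [hs, hi]⟩
        · obtain ⟨b, s, hs⟩ := r3 i
          exact ⟨.inr b, s, by show f2 (g2 b s) = p; rw [hs, hi]⟩
      · rintro (a | b) (a' | b') s s' hss
        · exact congrArg Sum.inl (q4 _ _ _ _ (hf1i hss))
        · exact absurd hss (hdisj _ _)
        · exact absurd hss.symm (hdisj _ _)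
        · exact congrArg Sum.inr (r4 _ _ _ _ (hf2i hss))
end Main

section Merge
variable {V ι : Type} {E : ι → Finset V}

open CST

/-- Merge two edge-disjoint closed strict trails sharing a vertex. -/
lemma merge_two (A B : CST E) (i j : ℕ) (hv : A.v i = B.v j)
    (hAB : ∀ s t, A.e s ≠ B.e t) :
    ∃ M : CST E,
      (∀ p : Fin A.n, ∃ s : Fin M.n, M.edge s = A.edge p) ∧
      (∀ p : Fin B.n, ∃ s : Fin M.n, M.edge s = B.edge p) ∧
      (∀ s : Fin M.n, (∃ p, M.edge s = A.edge p) ∨ (∃ p, M.edge s = B.edge p)) := by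
  have hA2 := A.hn; have hB2 := B.hn
  refine ⟨mkCST (A.n + B.n) (by omega)
    (fun t => if t < A.n then A.v (i + t) else B.v (j + (t - A.n)))
    (fun t => if t < A.n then A.e (i + t) else B.e (j + (t - A.n)))
    ?_ ?_ ?_ ?_ ?_, ?_, ?_, ?_⟩
  · show (if A.n + B.n < A.n then _ else B.v (j + (A.n + B.n - A.n)))
      = (if 0 < A.n then A.v (i + 0) else _)
    rw [if_neg (by omega), if_pos A.npos, Nat.add_sub_cancel_left, B.v_add_n,
      Nat.add_zero]
    exact hv.symm
  · intro s hs
    show (if s < A.n then A.v (i + s) else B.v (j + (s - A.n)))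
      ∈ E (if s < A.n then A.e (i + s) else B.e (j + (s - A.n)))
    split_ifs with h
    · exact A.v_mem _
    · exact B.v_mem _
  · intro s hs
    show (if s + 1 < A.n then A.v (i + (s + 1)) else B.v (j + (s + 1 - A.n)))
      ∈ E (if s < A.n then A.e (i + s) else B.e (j + (s - A.n)))
    rcases Nat.lt_trichotomy (s + 1) A.n with h1 | h1 | h1
    · rw [if_pos h1, if_pos (by omega)]
      exact A.v_succ_mem (i + s)
    · rw [if_neg (show ¬ (s + 1 < A.n) by omega), if_pos (show s < A.n by omega)]
      have e1 : B.v (j + (s + 1 - A.n)) = A.v ((i + s) + 1) := by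
        rw [show s + 1 - A.n = 0 by omega, Nat.add_zero, ← hv,
          show (i + s) + 1 = i + A.n by omega, A.v_add_n]
      rw [e1]
      exact A.v_succ_mem (i + s)
    · rw [if_neg (show ¬ (s + 1 < A.n) by omega), if_neg (show ¬ (s < A.n) by omega)]
      rw [show s + 1 - A.n = (s - A.n) + 1 by omega]
      exact B.v_succ_mem (j + (s - A.n))
  · intro s hs
    show (if s < A.n then A.v (i + s) else B.v (j + (s - A.n)))
      ≠ (if s + 1 < A.n then A.v (i + (s + 1)) else B.v (j + (s + 1 - A.n)))
    rcases Nat.lt_trichotomy (s + 1) A.n with h1 | h1 | h1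
    · rw [if_pos h1, if_pos (by omega)]
      exact A.v_ne (i + s)
    · rw [if_neg (show ¬ (s + 1 < A.n) by omega), if_pos (show s < A.n by omega)]
      have e1 : B.v (j + (s + 1 - A.n)) = A.v ((i + s) + 1) := by
        rw [show s + 1 - A.n = 0 by omega, Nat.add_zero, ← hv,
          show (i + s) + 1 = i + A.n by omega, A.v_add_n]
      rw [e1]
      exact A.v_ne (i + s)
    · rw [if_neg (show ¬ (s + 1 < A.n) by omega), if_neg (show ¬ (s < A.n) by omega)]
      rw [show s + 1 - A.n = (s - A.n) + 1 by omega]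
      exact B.v_ne (j + (s - A.n))
  · intro s hs t ht hef
    split_ifs at hef with h1 h2 h2
    · exact mod_cancel h1 h2 (A.e_inj hef)
    · exact absurd hef (hAB _ _)
    · exact absurd hef.symm (hAB _ _)
    · have := mod_cancel (show s - A.n < B.n by omega)
        (show t - A.n < B.n by omega) (B.e_inj hef)
      omega
  · intro p
    set t := (p.1 + A.n - i % A.n) % A.n with htdef
    have htA : t < A.n := Nat.mod_lt _ A.npos
    refine ⟨⟨t, by simp only [mkCST_n]; omega⟩, ?_⟩
    simp only [mkCST_edge]
    rw [if_pos htA, A.edge_eq_e]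
    exact e_congr A (by rw [key_mod i p.isLt, Nat.mod_eq_of_lt p.isLt])
  · intro p
    set t := (p.1 + B.n - j % B.n) % B.n with htdef
    have htB : t < B.n := Nat.mod_lt _ B.npos
    refine ⟨⟨A.n + t, by simp only [mkCST_n]; omega⟩, ?_⟩
    simp only [mkCST_edge]
    rw [if_neg (by omega), Nat.add_sub_cancel_left, B.edge_eq_e]
    exact e_congr B (by rw [key_mod j p.isLt, Nat.mod_eq_of_lt p.isLt])
  · intro s
    have hs := s.isLt
    simp only [mkCST_n] at hs
    by_cases h : s.1 < A.n
    · refine Or.inl ⟨⟨(i + s.1) % A.n, Nat.mod_lt _ A.npos⟩, ?_⟩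
      simp only [mkCST_edge]
      rw [if_pos h]
      rfl
    · refine Or.inr ⟨⟨(j + (s.1 - A.n)) % B.n, Nat.mod_lt _ B.npos⟩, ?_⟩
      simp only [mkCST_edge]
      rw [if_neg h]
      rfl

/-- Merge an edge-disjoint family of closed strict trails into an Euler family. -/
lemma merge_all : ∀ (N : ℕ) (σ : Type) (inst : Fintype σ) (T : σ → CST E),
    Fintype.card σ ≤ N →
    (∀ e, ∃ k i, (T k).edge i = e) →
    (∀ k k' i i', (T k).edge i = (T k').edge i' → k = k') →
    HasEulerFamily E := by
  intro N
  induction N with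
  | zero =>
    intro σ inst T hcard hcov hedge
    refine ⟨0, Fin.elim0, ?_, fun k => k.elim0, fun k => k.elim0⟩
    intro e
    obtain ⟨k, -⟩ := hcov e
    have h0 : Fintype.card σ = 0 := by omega
    exact ((Fintype.card_eq_zero_iff.mp h0).false k).elim
  | succ N ih =>
    intro σ inst T hcard hcov hedge
    classical
    by_cases hv : ∀ k k' (i : Fin (T k).n) (i' : Fin (T k').n),
        (T k).vert i = (T k').vert i' → k = k'
    · let eqv := Fintype.equivFin σ
      refine ⟨Fintype.card σ, fun k => T (eqv.symm k), ?_, ?_, ?_⟩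
      · intro e
        obtain ⟨k, i, hi⟩ := hcov e
        refine ⟨eqv k, ?_⟩
        show ∃ i, (T (eqv.symm (eqv k))).edge i = e
        rw [Equiv.symm_apply_apply]
        exact ⟨i, hi⟩
      · intro k k' i i' h
        exact eqv.symm.injective (hedge _ _ _ _ h)
      · intro k k' i i' h
        exact eqv.symm.injective (hv _ _ _ _ h)
    · push_neg at hv
      obtain ⟨k, k', i, i', hvi, hkk⟩ := hv
      have hVeq : (T k).v i.1 = (T k').v i'.1 := by
        rw [← vert_eq_v, ← vert_eq_v]; exact hvi
      have hAB : ∀ s t, (T k).e s ≠ (T k').e t := by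
        intro s t hst
        exact hkk (hedge _ _ _ _ hst)
      obtain ⟨M, hMA, hMB, hMsub⟩ := merge_two (T k) (T k') i.1 i'.1 hVeq hAB
      have hcard' : Fintype.card (Option {x : σ // x ≠ k ∧ x ≠ k'}) ≤ N := by
        have hinj : Function.Injective
            (fun x : Option {x : σ // x ≠ k ∧ x ≠ k'} => x.elim k Subtype.val) := by
          rintro (_ | ⟨y, hy⟩) (_ | ⟨z, hz⟩) hxy
          · rfl
          · simp only [Option.elim_none, Option.elim_some] at hxy
            exact absurd hxy.symm hz.1
          · simp only [Option.elim_none, Option.elim_some] at hxy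
            exact absurd hxy hy.1
          · simp only [Option.elim_some] at hxy
            exact congrArg some (Subtype.ext hxy)
        have hnm : k' ∉ Set.range
            (fun x : Option {x : σ // x ≠ k ∧ x ≠ k'} => x.elim k Subtype.val) := by
          rintro ⟨(_ | ⟨y, hy⟩), hx⟩
          · simp only [Option.elim_none] at hx
            exact hkk hx
          · simp only [Option.elim_some] at hx
            exact hy.2 hx
        have := Fintype.card_lt_of_injective_of_notMem _ hinj hnm
        omega
      refine ih (Option {x : σ // x ≠ k ∧ x ≠ k'}) inferInstance
        (fun x => x.elim M (fun y => T y.1)) hcard' ?_ ?_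
      · intro e
        obtain ⟨x, p, hp⟩ := hcov e
        by_cases hx1 : x = k
        · subst hx1
          obtain ⟨s, hs⟩ := hMA p
          exact ⟨none, s, by show M.edge s = e; rw [hs, hp]⟩
        · by_cases hx2 : x = k'
          · subst hx2
            obtain ⟨s, hs⟩ := hMB p
            exact ⟨none, s, by show M.edge s = e; rw [hs, hp]⟩
          · exact ⟨some ⟨x, hx1, hx2⟩, p, hp⟩
      · rintro (_ | ⟨z, hz⟩) (_ | ⟨w, hw⟩) s s' h
        · rfl
        · exfalso
          have h' : M.edge s = (T w).edge s' := h
          rcases hMsub s with ⟨p, hp⟩ | ⟨p, hp⟩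
          · rw [hp] at h'
            exact hw.1 (hedge _ _ _ _ h').symm
          · rw [hp] at h'
            exact hw.2 (hedge _ _ _ _ h').symm
        · exfalso
          have h' : (T z).edge s = M.edge s' := h
          rcases hMsub s' with ⟨p, hp⟩ | ⟨p, hp⟩
          · rw [hp] at h'
            exact hz.1 (hedge _ _ _ _ h')
          · rw [hp] at h'
            exact hz.2 (hedge _ _ _ _ h')
        · have h' : (T z).edge s = (T w).edge s' := h
          exact congrArg some (Subtype.ext (hedge _ _ _ _ h'))
end Merge

/-- A hypergraph admits an Euler family if and only if it admits a
cycle decomposition. -/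
theorem stmt18 {V ι : Type} [Nonempty V] (E : ι → Finset V) :
    HasEulerFamily E ↔
      ∃ (m : ℕ) (C : Fin m → CST E),
        (∀ k, Function.Injective (C k).vert) ∧
        (∀ e : ι, ∃ k i, (C k).edge i = e) ∧
        (∀ k k' i i', (C k).edge i = (C k').edge i' → k = k') := by
  constructor
  · rintro ⟨m, T, hcov, hedge, hvert⟩
    choose σ inst C g h1 h2 h3 h4 using fun k => decomp (T k).n (T k) le_rfl
    letI : ∀ k, Fintype (σ k) := inst
    let eqv := Fintype.equivFin ((k : Fin m) × σ k)
    refine ⟨Fintype.card ((k : Fin m) × σ k),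
      fun x => C (eqv.symm x).1 (eqv.symm x).2, ?_, ?_, ?_⟩
    · intro x
      exact h1 _ _
    · intro e
      obtain ⟨k, p, hp⟩ := hcov e
      obtain ⟨a, s, hs⟩ := h3 k p
      refine ⟨eqv ⟨k, a⟩, ?_⟩
      show ∃ i, (C (eqv.symm (eqv ⟨k, a⟩)).1 (eqv.symm (eqv ⟨k, a⟩)).2).edge i = e
      rw [Equiv.symm_apply_apply]
      exact ⟨s, by rw [h2 k a s, hs, hp]⟩
    · suffices H : ∀ (q q' : (k : Fin m) × σ k) (s : Fin (C q.1 q.2).n)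
          (s' : Fin (C q'.1 q'.2).n),
          (C q.1 q.2).edge s = (C q'.1 q'.2).edge s' → q = q' by
        intro x x' s s' h
        exact eqv.symm.injective (H _ _ s s' h)
      rintro ⟨k1, a1⟩ ⟨k2, a2⟩ s s' h
      simp only at h
      rw [h2, h2] at h
      have hk := hedge _ _ _ _ h
      subst hk
      have hg := (T k1).edge_inj h
      have ha := h4 k1 a1 a2 _ _ hg
      subst ha
      rfl
  · rintro ⟨m, C, hcyc, hcov, hedge⟩
    exact merge_all m (Fin m) inferInstance C (by simp) hcov hedge
end

section
/- Let H = (V,E) be a nonempty hypergraph without empty edges such that every edge has even cardinality, and let H^T be its dual. If F = (V,E') with E' ⊆ E is a 2-factor of H (a spanning hypersubgraph in which every vertex has degree exactly 2), then H^T admits an Euler family whose set of anchor vertices is exactly E' and which traverses every vertex e ∈ E' exactly |e|/2 times. -/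
open Finset

/-- The dual of the hypergraph `E : ι → Finset V`: its vertices are the edges of
`E`, and its edges are `v^T = {e : v ∈ e}` for `v ∈ V`. -/
def dualH {V ι : Type} [Fintype ι] [DecidableEq V] (E : ι → Finset V) :
    V → Finset ι :=
  fun v => Finset.univ.filter fun e => v ∈ E e

section EulerLemmas

set_option linter.unusedSectionVars false

variable {α β : Type} [DecidableEq α] [DecidableEq β]

/-- degree of `a` in the multigraph with edge set `S` and endpoint map `ends`. -/
def degE (ends : β → Finset α) (S : Finset β) (a : α) : ℕ :=
  (S.filter fun b => a ∈ ends b).card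

/-- a trail of length `n`: anchors `av 0 … av n`, edges `ed 0 … ed (n-1)`,
all edges distinct and in `S`. -/
def IsTrail (ends : β → Finset α) (S : Finset β) (n : ℕ) (av : ℕ → α) (ed : ℕ → β) : Prop :=
  (∀ i, i < n → ed i ∈ S) ∧ (∀ i, i < n → ends (ed i) = {av i, av (i + 1)}) ∧
  (∀ i j, i < n → j < n → ed i = ed j → i = j)

variable {ends : β → Finset α} {S : Finset β}

lemma trail_card_le {n av ed} (h : IsTrail ends S n av ed) : n ≤ S.card := by
  have h2 := Finset.card_le_card_of_injOn ed (fun i hi => h.1 i (mem_range.mp hi))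
    (fun i hi j hj hij => h.2.2 i j (mem_range.mp hi) (mem_range.mp hj) hij)
  simpa using h2

lemma trail_mono {n av ed} {S' : Finset β} (hsub : S ⊆ S') (h : IsTrail ends S n av ed) :
    IsTrail ends S' n av ed :=
  ⟨fun i hi => hsub (h.1 i hi), h.2.1, h.2.2⟩

lemma other_pt {s : Finset α} (h2 : s.card = 2) {v : α} (hv : v ∈ s) :
    ∃ c, c ≠ v ∧ s = {v, c} := by
  obtain ⟨x, y, hxy, rfl⟩ := Finset.card_eq_two.mp h2
  rcases Finset.mem_insert.mp hv with rfl | h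
  · exact ⟨y, Ne.symm hxy, rfl⟩
  · rw [Finset.mem_singleton] at h
    subst h
    exact ⟨x, hxy, Finset.pair_comm x v⟩

lemma trail_ne {n av ed} (h : IsTrail ends S n av ed) (h2 : ∀ b ∈ S, (ends b).card = 2)
    {i : ℕ} (hi : i < n) : av i ≠ av (i + 1) := by
  have hc := h2 _ (h.1 i hi)
  rw [h.2.1 i hi] at hc
  intro hEq
  rw [hEq] at hc
  simp at hc

lemma used_count {n av ed} (h : IsTrail ends S n av ed) (h2 : ∀ b ∈ S, (ends b).card = 2)
    (v : α) :
    (∑ i ∈ Finset.range n, if v ∈ ends (ed i) then 1 else 0) + (if av 0 = v then 1 else 0)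
    = 2 * (∑ i ∈ Finset.range n, if av i = v then 1 else 0)
      + (if av n = v then 1 else 0) := by
  have hstep : ∀ i ∈ Finset.range n, (if v ∈ ends (ed i) then (1:ℕ) else 0)
      = (if av i = v then 1 else 0) + (if av (i+1) = v then 1 else 0) := by
    intro i hi
    have hi' := mem_range.mp hi
    have hne := trail_ne h h2 hi'
    rw [h.2.1 i hi']
    by_cases h1 : av i = v
    · have h2' : av (i+1) ≠ v := fun hh => hne (h1.trans hh.symm)
      simp [h1, h2', Finset.mem_insert]
    · by_cases h2' : av (i+1) = v
      · simp [h1, h2', Finset.mem_insert, eq_comm]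
      · have : v ∉ ({av i, av (i+1)} : Finset α) := by
          simp [Finset.mem_insert, eq_comm, h1, h2']
          exact ⟨fun hh => h1 hh.symm, fun hh => h2' hh.symm⟩
        simp [this, h1, h2']
  rw [Finset.sum_congr rfl hstep, Finset.sum_add_distrib]
  have e1 := Finset.sum_range_succ (fun i => if av i = v then (1:ℕ) else 0) n
  have e2 := Finset.sum_range_succ' (fun i => if av i = v then (1:ℕ) else 0) n
  omega

lemma usedS_eq {n av ed} (h : IsTrail ends S n av ed) (v : α) :
    ((S.filter fun b => v ∈ ends b).filter fun b => ∃ i, i < n ∧ ed i = b).card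
    = ∑ i ∈ Finset.range n, if v ∈ ends (ed i) then 1 else 0 := by
  classical
  rw [← Finset.card_filter]
  refine (Finset.card_bij (fun i _ => ed i) ?_ ?_ ?_).symm
  · intro i hi
    simp only [Finset.mem_filter, Finset.mem_range] at hi ⊢
    exact ⟨⟨h.1 i hi.1, hi.2⟩, i, hi.1, rfl⟩
  · intro i hi j hj hij
    simp only [Finset.mem_filter, Finset.mem_range] at hi hj
    exact h.2.2 i j hi.1 hj.1 hij
  · intro b hb
    simp only [Finset.mem_filter] at hb
    obtain ⟨⟨hbS, hbv⟩, i, hi, rfl⟩ := hb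
    exact ⟨i, by simp [Finset.mem_filter, hi, hbv], rfl⟩

lemma deg_partition {n av ed} (h : IsTrail ends S n av ed) (v : α) :
    degE ends S v = (∑ i ∈ Finset.range n, if v ∈ ends (ed i) then 1 else 0)
      + degE ends (S.filter fun b => ¬ ∃ i, i < n ∧ ed i = b) v := by
  classical
  rw [← usedS_eq h v]
  unfold degE
  rw [Finset.filter_filter, Finset.filter_filter]
  have hcomm : (S.filter fun b => (¬ ∃ i, i < n ∧ ed i = b) ∧ v ∈ ends b)
      = (S.filter fun b => v ∈ ends b ∧ ¬ ∃ i, i < n ∧ ed i = b) := by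
    apply Finset.filter_congr; intro b _; exact and_comm
  rw [hcomm]
  have key := Finset.card_filter_add_card_filter_not
    (s := S.filter fun b => v ∈ ends b) (p := fun b => ∃ i, i < n ∧ ed i = b)
  rw [Finset.filter_filter, Finset.filter_filter] at key
  exact key.symm


lemma exists_closed (h2 : ∀ b ∈ S, (ends b).card = 2)
    (heven : ∀ x, Even (degE ends S x)) {a : α} (ha : 0 < degE ends S a) :
    ∃ n av ed, IsTrail ends S n av ed ∧ av 0 = a ∧ av n = a ∧ 2 ≤ n := by
  classical
  set P : ℕ → Prop := fun n => ∃ av ed, IsTrail ends S n av ed ∧ av 0 = a with hP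
  -- P 1 holds
  have ha' : 0 < (S.filter fun b => a ∈ ends b).card := ha
  obtain ⟨b, hb⟩ := Finset.card_pos.mp ha'
  rw [Finset.mem_filter] at hb
  obtain ⟨c, hca, hends⟩ := other_pt (h2 b hb.1) hb.2
  have hP1 : P 1 := by
    refine ⟨fun i => if i = 0 then a else c, fun _ => b, ⟨?_, ?_, ?_⟩, by simp⟩
    · intro i _; exact hb.1
    · intro i hi
      interval_cases i
      simpa using hends
    · intro i j hi hj _; omega
  have hcard1 : 1 ≤ S.card := Finset.card_pos.mpr ⟨b, hb.1⟩
  set N := Nat.findGreatest P S.card with hN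
  obtain ⟨av, ed, htr, hav0⟩ : P N := Nat.findGreatest_spec hcard1 hP1
  have hN1 : 1 ≤ N := Nat.le_findGreatest hcard1 hP1
  -- the maximal trail is closed
  have hclosed : av N = a := by
    by_contra hne
    set v := av N with hv
    have hodd : Odd (∑ i ∈ Finset.range N, if v ∈ ends (ed i) then 1 else 0) := by
      have huc := used_count htr h2 v
      rw [hav0] at huc
      have e0 : (if a = v then (1:ℕ) else 0) = 0 := if_neg (fun hh => hne hh.symm)
      have eN : (if av N = v then (1:ℕ) else 0) = 1 := if_pos rfl
      rw [e0, eN] at huc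
      exact ⟨∑ i ∈ Finset.range N, if av i = v then 1 else 0, by omega⟩
    have hpart := deg_partition htr v
    have hEv := heven v
    have hpos : 0 < degE ends (S.filter fun b => ¬ ∃ i, i < N ∧ ed i = b) v := by
      rcases hEv with ⟨t, ht⟩; rcases hodd with ⟨t', ht'⟩; omega
    have hpos' : 0 < ((S.filter fun b => ¬ ∃ i, i < N ∧ ed i = b).filter
        fun b => v ∈ ends b).card := hpos
    obtain ⟨b', hb'⟩ := Finset.card_pos.mp hpos'
    simp only [Finset.mem_filter] at hb'
    obtain ⟨⟨hb'S, hb'new⟩, hb'v⟩ := hb'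
    obtain ⟨c', hc'ne, hc'ends⟩ := other_pt (h2 b' hb'S) hb'v
    -- extend the trail
    have hPN1 : P (N + 1) := by
      refine ⟨fun i => if i = N + 1 then c' else av i, fun i => if i = N then b' else ed i,
        ⟨?_, ?_, ?_⟩, ?_⟩
      · intro i hi
        by_cases h : i = N
        · simp [h, hb'S]
        · have : i < N := by omega
          simp [h, htr.1 i this]
      · intro i hi
        by_cases h : i = N
        · subst h
          have hNe : N ≠ N + 1 := by omega
          simp [hNe, hc'ends, hv]
        · have hiN : i < N := by omega
          simp only [if_neg h, if_neg (by omega : i ≠ N + 1), if_neg (by omega : i + 1 ≠ N + 1)]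
          exact htr.2.1 i hiN
      · intro i j hi hj hij
        by_cases h : i = N <;> by_cases h' : j = N
        · omega
        · exfalso; rw [h] at hij; simp [h'] at hij
          exact hb'new ⟨j, by omega, hij.symm⟩
        · exfalso; rw [h'] at hij; simp [h] at hij
          exact hb'new ⟨i, by omega, hij⟩
        · simp only [if_neg h, if_neg h'] at hij
          exact htr.2.2 i j (by omega) (by omega) hij
      · simp only [if_neg (by omega : (0:ℕ) ≠ N + 1)]; exact hav0
    have hle : N + 1 ≤ S.card := by
      obtain ⟨av', ed', htr', _⟩ := hPN1
      exact trail_card_le htr'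
    have := Nat.le_findGreatest hle hPN1
    omega
  refine ⟨N, av, ed, htr, hav0, hclosed, ?_⟩
  rcases Nat.lt_or_ge N 2 with h | h
  · exfalso
    have hN1' : N = 1 := by omega
    have := trail_ne htr h2 (show 0 < N by omega)
    rw [hav0] at this
    rw [hN1'] at hclosed
    exact this (by rw [hclosed])
  · exact h

lemma rotate_trail {n av ed} (htr : IsTrail ends S n av ed) (hcl : av n = av 0)
    (hn : 2 ≤ n) {j : ℕ} (hj : j < n) :
    ∃ av' ed', IsTrail ends S n av' ed' ∧ av' n = av' 0 ∧ av' 0 = av j ∧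
      ∀ i, i < n → ∃ i', i' < n ∧ ed' i = ed i' := by
  have hn0 : 0 < n := by omega
  have hglue : ∀ k, av ((k + 1) % n) = av (k % n + 1) := by
    intro k
    have hr : k % n < n := Nat.mod_lt _ hn0
    rcases Nat.lt_or_ge (k % n + 1) n with h | h
    · have e1 : (k + 1) % n = (k % n + 1) % n := by
        rw [Nat.add_mod, Nat.mod_eq_of_lt (show 1 < n by omega)]
      rw [e1, Nat.mod_eq_of_lt h]
    · have h1 : k % n + 1 = n := by omega
      have e1 : (k + 1) % n = (k % n + 1) % n := by
        rw [Nat.add_mod, Nat.mod_eq_of_lt (show 1 < n by omega)]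
      rw [e1, h1, Nat.mod_self, hcl]
  refine ⟨fun i => av ((i + j) % n), fun i => ed ((i + j) % n), ⟨?_, ?_, ?_⟩, ?_, ?_, ?_⟩
  · intro i hi; exact htr.1 _ (Nat.mod_lt _ hn0)
  · intro i hi
    show ends (ed ((i + j) % n)) = {av ((i + j) % n), av ((i + 1 + j) % n)}
    rw [htr.2.1 ((i + j) % n) (Nat.mod_lt _ hn0), show i + 1 + j = i + j + 1 by omega,
      hglue (i + j)]
  · intro i i' hi hi' hij
    have := htr.2.2 _ _ (Nat.mod_lt (i + j) hn0) (Nat.mod_lt (i' + j) hn0) hij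
    have hmod : (i + j) % n = (i' + j) % n := this
    have : i % n = i' % n := Nat.ModEq.add_right_cancel' j hmod
    rw [Nat.mod_eq_of_lt hi, Nat.mod_eq_of_lt hi'] at this
    exact this
  · show av ((n + j) % n) = av ((0 + j) % n)
    rw [Nat.add_mod_left, Nat.zero_add]
  · show av ((0 + j) % n) = av j
    rw [Nat.zero_add, Nat.mod_eq_of_lt hj]
  · intro i hi; exact ⟨(i + j) % n, Nat.mod_lt _ hn0, rfl⟩

lemma concat_trail {n₁ n₂ av₁ ed₁ av₂ ed₂} (h1 : IsTrail ends S n₁ av₁ ed₁)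
    (h2 : IsTrail ends S n₂ av₂ ed₂) (hc1 : av₁ n₁ = av₁ 0) (hc2 : av₂ n₂ = av₂ 0)
    (hstart : av₂ 0 = av₁ 0)
    (hdisj : ∀ i i', i < n₁ → i' < n₂ → ed₁ i ≠ ed₂ i') :
    ∃ av ed, IsTrail ends S (n₁ + n₂) av ed ∧ av (n₁ + n₂) = av 0 ∧ av 0 = av₁ 0 := by
  refine ⟨fun i => if i < n₁ then av₁ i else av₂ (i - n₁),
    fun i => if i < n₁ then ed₁ i else ed₂ (i - n₁), ⟨?_, ?_, ?_⟩, ?_, ?_⟩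
  · intro i hi
    by_cases h : i < n₁
    · simp only [if_pos h]; exact h1.1 i h
    · simp only [if_neg h]; exact h2.1 (i - n₁) (by omega)
  · intro i hi
    by_cases h : i < n₁
    · simp only [if_pos h]
      rw [h1.2.1 i h]
      congr 1
      by_cases h' : i + 1 < n₁
      · rw [if_pos h']
      · have hi1 : i + 1 = n₁ := by omega
        rw [if_neg h', hi1, Nat.sub_self, hstart, ← hc1]
    · simp only [if_neg h, if_neg (show ¬ i + 1 < n₁ by omega)]
      rw [show i + 1 - n₁ = i - n₁ + 1 by omega]
      exact h2.2.1 (i - n₁) (by omega)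
  · intro i j hi hj hij
    by_cases h : i < n₁ <;> by_cases h' : j < n₁
    · simp only [if_pos h, if_pos h'] at hij; exact h1.2.2 i j h h' hij
    · simp only [if_pos h, if_neg h'] at hij
      exact absurd hij (hdisj i (j - n₁) h (by omega))
    · simp only [if_neg h, if_pos h'] at hij
      exact absurd hij.symm (hdisj j (i - n₁) h' (by omega))
    · simp only [if_neg h, if_neg h'] at hij
      have := h2.2.2 (i - n₁) (j - n₁) (by omega) (by omega) hij
      omega
  · show (if n₁ + n₂ < n₁ then av₁ (n₁ + n₂) else av₂ (n₁ + n₂ - n₁))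
        = (if 0 < n₁ then av₁ 0 else av₂ (0 - n₁))
    rw [if_neg (by omega : ¬ n₁ + n₂ < n₁), show n₁ + n₂ - n₁ = n₂ by omega, hc2, hstart]
    by_cases h0 : 0 < n₁
    · rw [if_pos h0]
    · rw [if_neg h0, show 0 - n₁ = 0 by omega, hstart]
  · show (if 0 < n₁ then av₁ 0 else av₂ (0 - n₁)) = av₁ 0
    by_cases h0 : 0 < n₁
    · rw [if_pos h0]
    · rw [if_neg h0, show 0 - n₁ = 0 by omega, hstart]


lemma decomp_s19 : ∀ (M : ℕ) (S : Finset β), S.card ≤ M → (∀ b ∈ S, (ends b).card = 2) →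
    (∀ x, Even (degE ends S x)) →
    ∃ (m : ℕ) (nn : Fin m → ℕ) (av : Fin m → ℕ → α) (ed : Fin m → ℕ → β),
      (∀ k, IsTrail ends S (nn k) (av k) (ed k)) ∧ (∀ k, 2 ≤ nn k) ∧
      (∀ k, av k (nn k) = av k 0) ∧
      (∀ b ∈ S, ∃ k i, i < nn k ∧ ed k i = b) ∧
      (∀ k k' i i', i < nn k → i' < nn k' → ed k i = ed k' i' → k = k') ∧
      (∀ k k' i i', i < nn k → i' < nn k' → av k i = av k' i' → k = k') := by
  intro M
  induction M with
  | zero =>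
    intro S hcard _ _
    have hS : S = ∅ := Finset.card_eq_zero.mp (by omega)
    subst hS
    exact ⟨0, Fin.elim0, Fin.elim0, Fin.elim0, fun k => k.elim0, fun k => k.elim0,
      fun k => k.elim0, fun b hb => absurd hb (Finset.notMem_empty b),
      fun k => k.elim0, fun k => k.elim0⟩
  | succ M ih =>
    intro S hcard h2 heven
    classical
    rcases Finset.eq_empty_or_nonempty S with hS | ⟨b₀, hb₀⟩
    · subst hS
      exact ⟨0, Fin.elim0, Fin.elim0, Fin.elim0, fun k => k.elim0, fun k => k.elim0,
        fun k => k.elim0, fun b hb => absurd hb (Finset.notMem_empty b),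
        fun k => k.elim0, fun k => k.elim0⟩
    obtain ⟨a₀, ha₀⟩ := Finset.card_pos.mp (by rw [h2 b₀ hb₀]; omega : 0 < (ends b₀).card)
    have hdeg₀ : 0 < degE ends S a₀ :=
      Finset.card_pos.mpr ⟨b₀, Finset.mem_filter.mpr ⟨hb₀, ha₀⟩⟩
    -- a maximal closed trail
    set Q : ℕ → Prop := fun n => 2 ≤ n ∧ ∃ av ed, IsTrail ends S n av ed ∧ av n = av 0 with hQ
    obtain ⟨n₀, av₀, ed₀, htr₀, h0₀, hn₀, h2₀⟩ := exists_closed h2 heven hdeg₀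
    have hQn₀ : Q n₀ := ⟨h2₀, av₀, ed₀, htr₀, by rw [hn₀, h0₀]⟩
    set N := Nat.findGreatest Q S.card with hNdef
    obtain ⟨hN2, av, ed, htr, hcl⟩ : Q N := Nat.findGreatest_spec (trail_card_le htr₀) hQn₀
    set S' := S.filter fun b => ¬ ∃ i, i < N ∧ ed i = b with hS'def
    have hS'sub : S' ⊆ S := Finset.filter_subset _ _
    have hS'lt : S'.card < S.card := by
      apply Finset.card_lt_card
      refine ⟨hS'sub, fun hsub => ?_⟩
      have : ed 0 ∈ S' := hsub (htr.1 0 (by omega))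
      rw [hS'def, Finset.mem_filter] at this
      exact this.2 ⟨0, by omega, rfl⟩
    have h2' : ∀ b ∈ S', (ends b).card = 2 := fun b hb => h2 b (hS'sub hb)
    have hpart : ∀ v, degE ends S v
        = (∑ i ∈ Finset.range N, if v ∈ ends (ed i) then 1 else 0) + degE ends S' v :=
      fun v => deg_partition htr v
    have hused : ∀ v, (∑ i ∈ Finset.range N, if v ∈ ends (ed i) then 1 else 0)
        = 2 * (∑ i ∈ Finset.range N, if av i = v then 1 else 0) := by
      intro v
      have huc := used_count htr h2 v
      rw [hcl] at huc
      omega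
    have heven' : ∀ x, Even (degE ends S' x) := by
      intro x
      obtain ⟨t, ht⟩ := heven x
      have h1 := hpart x
      have h2'' := hused x
      exact ⟨degE ends S' x / 2, by omega⟩
    obtain ⟨m, nn', av', ed', htr', hn2', hcl', hcov', hedisj', hvdisj'⟩ :=
      ih S' (by omega) h2' heven'
    -- no remaining edge touches an anchor of the maximal trail
    have hkey : ∀ j, j < N → degE ends S' (av j) = 0 := by
      intro j hj
      by_contra hpos
      have hpos' : 0 < degE ends S' (av j) := Nat.pos_of_ne_zero hpos
      obtain ⟨n'', av'', ed'', htr'', h0'', hn'', h2''⟩ := exists_closed h2' heven' hpos'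
      obtain ⟨avR, edR, htrR, hclR, h0R, hedR⟩ := rotate_trail htr hcl hN2 hj
      have htr''S : IsTrail ends S n'' av'' ed'' := trail_mono hS'sub htr''
      have hdisj : ∀ i i', i < N → i' < n'' → edR i ≠ ed'' i' := by
        intro i i' hi hi' hEq
        obtain ⟨i₂, hi₂, hEq₂⟩ := hedR i hi
        have : ed'' i' ∈ S' := htr''.1 i' hi'
        rw [hS'def, Finset.mem_filter] at this
        exact this.2 ⟨i₂, hi₂, by rw [← hEq₂, hEq]⟩
      obtain ⟨avC, edC, htrC, hclC, h0C⟩ :=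
        concat_trail htrR htr''S hclR (by rw [hn'', h0'']) (by rw [h0'', h0R]) hdisj
      have hQC : Q (N + n'') := ⟨by omega, avC, edC, htrC, hclC⟩
      have := Nat.le_findGreatest (trail_card_le htrC) hQC
      omega
    have hnotanchor : ∀ k i', i' < nn' k → ∀ j, j < N → av' k i' ≠ av j := by
      intro k i' hi' j hj hEq
      have hmem : av' k i' ∈ ends (ed' k i') := by
        rw [(htr' k).2.1 i' hi']
        exact Finset.mem_insert_self _ _
      have hedS' : ed' k i' ∈ S' := (htr' k).1 i' hi'
      have : 0 < degE ends S' (av j) := by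
        apply Finset.card_pos.mpr
        exact ⟨ed' k i', Finset.mem_filter.mpr ⟨hedS', by rw [← hEq]; exact hmem⟩⟩
      rw [hkey j hj] at this
      omega
    -- assemble
    refine ⟨m + 1, Fin.cases N nn', Fin.cases av av', Fin.cases ed ed', ?_, ?_, ?_, ?_, ?_, ?_⟩
    · intro k
      induction k using Fin.cases with
      | zero => simpa using htr
      | succ k => simpa using trail_mono hS'sub (htr' k)
    · intro k
      induction k using Fin.cases with
      | zero => simpa using hN2
      | succ k => simpa using hn2' k
    · intro k
      induction k using Fin.cases with
      | zero => simpa using hcl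
      | succ k => simpa using hcl' k
    · intro b hb
      by_cases hbT : ∃ i, i < N ∧ ed i = b
      · obtain ⟨i, hi, hEq⟩ := hbT
        exact ⟨0, i, by simpa using ⟨hi, hEq⟩⟩
      · have hbS' : b ∈ S' := by rw [hS'def, Finset.mem_filter]; exact ⟨hb, hbT⟩
        obtain ⟨k, i, hi, hEq⟩ := hcov' b hbS'
        exact ⟨k.succ, i, by simpa using ⟨hi, hEq⟩⟩
    · intro k k' i i' hi hi' hEq
      induction k using Fin.cases with
      | zero =>
        induction k' using Fin.cases with
        | zero => rfl
        | succ k' =>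
          exfalso
          simp only [Fin.cases_zero, Fin.cases_succ] at hEq hi hi'
          have : ed' k' i' ∈ S' := (htr' k').1 i' hi'
          rw [hS'def, Finset.mem_filter] at this
          exact this.2 ⟨i, hi, hEq⟩
      | succ k =>
        induction k' using Fin.cases with
        | zero =>
          exfalso
          simp only [Fin.cases_zero, Fin.cases_succ] at hEq hi hi'
          have : ed' k i ∈ S' := (htr' k).1 i hi
          rw [hS'def, Finset.mem_filter] at this
          exact this.2 ⟨i', hi', hEq.symm⟩
        | succ k' =>
          simp only [Fin.cases_succ] at hEq hi hi'
          exact congrArg Fin.succ (hedisj' k k' i i' hi hi' hEq)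
    · intro k k' i i' hi hi' hEq
      induction k using Fin.cases with
      | zero =>
        induction k' using Fin.cases with
        | zero => rfl
        | succ k' =>
          exfalso
          simp only [Fin.cases_zero, Fin.cases_succ] at hEq hi hi'
          exact hnotanchor k' i' hi' i hi hEq.symm
      | succ k =>
        induction k' using Fin.cases with
        | zero =>
          exfalso
          simp only [Fin.cases_zero, Fin.cases_succ] at hEq hi hi'
          exact hnotanchor k i hi i' hi' hEq
        | succ k' =>
          simp only [Fin.cases_succ] at hEq hi hi'
          exact congrArg Fin.succ (hvdisj' k k' i i' hi hi' hEq)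

end EulerLemmas


/-- Let `H = (V,E)` be a nonempty hypergraph without empty edges in
which every edge has even cardinality.  If `(V, E')` is a 2-factor of `H` (every
vertex lies in exactly two edges of `E'`), then the dual `H^T` admits an Euler
family whose set of anchor vertices is exactly `E'`, traversing each anchor
`e ∈ E'` exactly `|e|/2` times (and each `e ∉ E'` zero times). -/
theorem stmt19 {V ι : Type} [Fintype V] [Fintype ι] [DecidableEq V] [DecidableEq ι]
    [Nonempty V] [Nonempty ι] (E : ι → Finset V)
    (hne : ∀ e, (E e).Nonempty) (heven : ∀ e, Even (E e).card)
    (E' : Finset ι) (h2f : ∀ v : V, (E'.filter fun e => v ∈ E e).card = 2) :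
    ∃ (m : ℕ) (T : Fin m → CST (dualH E)),
      (∀ v : V, ∃ k i, (T k).edge i = v) ∧
      (∀ k k' i i', (T k).edge i = (T k').edge i' → k = k') ∧
      (∀ k k' i i', (T k).vert i = (T k').vert i' → k = k') ∧
      (∀ e : ι, (∑ k, (Finset.univ.filter fun i => (T k).vert i = e).card) =
        if e ∈ E' then (E e).card / 2 else 0) := by
  classical
  set ends : V → Finset ι := fun v => E'.filter fun e => v ∈ E e with hends
  have h2 : ∀ v ∈ (Finset.univ : Finset V), (ends v).card = 2 := fun v _ => h2f v
  have hdeg : ∀ e, degE ends Finset.univ e = if e ∈ E' then (E e).card else 0 := by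
    intro e
    by_cases he : e ∈ E'
    · rw [if_pos he]
      have : (Finset.univ.filter fun v => e ∈ ends v) = E e := by
        ext v
        simp [hends, Finset.mem_filter, he]
      rw [degE, this]
    · rw [if_neg he]
      have : (Finset.univ.filter fun v => e ∈ ends v) = ∅ := by
        ext v
        simp [hends, Finset.mem_filter, he]
      rw [degE, this, Finset.card_empty]
  have heven' : ∀ x, Even (degE ends Finset.univ x) := by
    intro x
    rw [hdeg x]
    by_cases hx : x ∈ E'
    · rw [if_pos hx]; exact heven x
    · rw [if_neg hx]; exact Even.zero
  obtain ⟨m, nn, av, ed, htr, hn2, hcl, hcov, hedisj, hvdisj⟩ :=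
    decomp_s19 (ends := ends) Finset.univ.card Finset.univ le_rfl h2 heven'
  have hnxt : ∀ k (i : ℕ), i < nn k → av k ((i + 1) % nn k) = av k (i + 1) := by
    intro k i hi
    rcases Nat.lt_or_ge (i + 1) (nn k) with h | h
    · rw [Nat.mod_eq_of_lt h]
    · have hEq : i + 1 = nn k := by omega
      rw [hEq, Nat.mod_self]
      exact (hcl k).symm
  have hmemE : ∀ k (i : ℕ), i < nn k → ed k i ∈ E (av k i) ∧ ed k i ∈ E (av k (i + 1)) := by
    intro k i hi
    have h1 := (htr k).2.1 i hi
    constructor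
    · have : av k i ∈ ends (ed k i) := by rw [h1]; exact Finset.mem_insert_self _ _
      rw [hends] at this
      exact (Finset.mem_filter.mp this).2
    · have : av k (i + 1) ∈ ends (ed k i) := by
        rw [h1]; exact Finset.mem_insert_of_mem (Finset.mem_singleton_self _)
      rw [hends] at this
      exact (Finset.mem_filter.mp this).2
  refine ⟨m, fun k =>
    { n := nn k
      hn := hn2 k
      vert := fun i => av k i.1
      edge := fun i => ed k i.1
      mem_left := ?_
      mem_right := ?_
      ne_next := ?_
      edge_inj := ?_ }, ?_, ?_, ?_, ?_⟩
  · intro i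
    rw [dualH]
    exact Finset.mem_filter.mpr ⟨Finset.mem_univ _, (hmemE k i.1 i.isLt).1⟩
  · intro i
    show av k ((i.1 + 1) % nn k) ∈ dualH E (ed k i.1)
    rw [hnxt k i.1 i.isLt, dualH]
    exact Finset.mem_filter.mpr ⟨Finset.mem_univ _, (hmemE k i.1 i.isLt).2⟩
  · intro i
    show av k i.1 ≠ av k ((i.1 + 1) % nn k)
    rw [hnxt k i.1 i.isLt]
    exact trail_ne (htr k) h2 i.isLt
  · intro i j hij
    exact Fin.ext ((htr k).2.2 i.1 j.1 i.isLt j.isLt hij)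
  · intro v
    obtain ⟨k, i, hi, hEq⟩ := hcov v (Finset.mem_univ v)
    exact ⟨k, ⟨i, hi⟩, hEq⟩
  · intro k k' i i' hEq
    exact hedisj k k' i.1 i'.1 i.isLt i'.isLt hEq
  · intro k k' i i' hEq
    exact hvdisj k k' i.1 i'.1 i.isLt i'.isLt hEq
  · intro e
    have per_k : ∀ k, ((Finset.univ.filter fun i : Fin (nn k) => av k i.1 = e)).card
        = ∑ i ∈ Finset.range (nn k), if av k i = e then 1 else 0 := by
      intro k
      rw [Finset.card_filter]
      exact Fin.sum_univ_eq_sum_range (fun i => if av k i = e then 1 else 0) (nn k)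
    have doubling : ∀ k, (∑ i ∈ Finset.range (nn k), if e ∈ ends (ed k i) then 1 else 0)
        = 2 * ∑ i ∈ Finset.range (nn k), if av k i = e then 1 else 0 := by
      intro k
      have huc := used_count (htr k) h2 e
      rw [hcl k] at huc
      omega
    have hsig : (∑ k, ∑ i ∈ Finset.range (nn k), if e ∈ ends (ed k i) then 1 else 0)
        = ∑ p : (Σ k : Fin m, Fin (nn k)), (if e ∈ ends (ed p.1 p.2.1) then 1 else 0) := by
      rw [← Finset.univ_sigma_univ, Finset.sum_sigma]
      refine Finset.sum_congr rfl fun k _ => ?_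
      exact (Fin.sum_univ_eq_sum_range (fun i => if e ∈ ends (ed k i) then 1 else 0) (nn k)).symm
    have hbij : (∑ p : (Σ k : Fin m, Fin (nn k)), (if e ∈ ends (ed p.1 p.2.1) then 1 else 0))
        = ∑ v : V, (if e ∈ ends v then 1 else 0) := by
      apply Finset.sum_bij (fun p _ => ed p.1 p.2.1)
      · intro p _; exact Finset.mem_univ _
      · rintro ⟨k, i⟩ _ ⟨k', i'⟩ _ hpq
        simp only at hpq
        have hk := hedisj k k' i.1 i'.1 i.isLt i'.isLt hpq
        subst hk
        have := (htr k).2.2 i.1 i'.1 i.isLt i'.isLt hpq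
        exact congrArg (Sigma.mk k) (Fin.ext this)
      · intro v _
        obtain ⟨k, i, hi, hEq⟩ := hcov v (Finset.mem_univ v)
        exact ⟨⟨k, ⟨i, hi⟩⟩, Finset.mem_univ _, hEq⟩
      · intro p _; rfl
    have hdege : (∑ v : V, (if e ∈ ends v then 1 else 0)) = degE ends Finset.univ e := by
      rw [degE, Finset.card_filter]
    have hfinal : 2 * (∑ k, ((Finset.univ.filter fun i : Fin (nn k) => av k i.1 = e)).card)
        = if e ∈ E' then (E e).card else 0 := by
      rw [← hdeg e, ← hdege, ← hbij, ← hsig, Finset.mul_sum]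
      exact Finset.sum_congr rfl fun k _ => by rw [per_k k, doubling k]
    show (∑ k, ((Finset.univ.filter fun i : Fin (nn k) => av k i.1 = e)).card)
        = if e ∈ E' then (E e).card / 2 else 0
    by_cases he : e ∈ E'
    · rw [if_pos he] at hfinal ⊢
      obtain ⟨t, ht⟩ := heven e
      omega
    · rw [if_neg he] at hfinal ⊢
      omega
end
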